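/- arXiv:1604.01562 — 6 statements merged into one kernel-verified Lean document; each statement's English description precedes it below -/
import Mathlib

section
/- (1) For every prime number ℓ dividing q, there exist two distinct prime ideals P and Q of the ring ℤ[τ] such that the principal ideal generated by ℓ equals P·Q. (2) For every integer w ≥ 0, if a and b are integers with a + b·τ = τ^w or with a + b·τ = (conj τ)^w (where conj τ is the complex conjugate of τ), then gcd(a, b) = 1. -/
noncomputable section

open Complex

/-- The base τ = p/2 + i√(q − 1/4). -/
def tauC (q p : ℤ) : ℂ := (p : ℂ) / 2 + Complex.I * (Real.sqrt ((q : ℝ) - 1/4) : ℝ)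

/-- The lattice ℤ[τ] = {a + bτ : a, b ∈ ℤ} as a subset of ℂ. -/
def Ztau (q p : ℤ) : Set ℂ := {z | ∃ a b : ℤ, z = (a : ℂ) + (b : ℂ) * tauC q p}

/-- τ^k divides z within ℤ[τ]. -/
def tauPowDvd (q p : ℤ) (k : ℕ) (z : ℂ) : Prop :=
  ∃ u ∈ Ztau q p, z = (tauC q p) ^ k * u

/-- η is a nonzero digit modulo τ^w: η ∈ ℤ[τ], τ ∤ η, and η has minimal norm in
its residue class modulo τ^w. -/
def IsNonzeroDigit (q p : ℤ) (w : ℕ) (η : ℂ) : Prop :=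
  η ∈ Ztau q p ∧ ¬ tauPowDvd q p 1 η ∧
    ∀ y ∈ Ztau q p, ‖η‖ ≤ ‖η - (tauC q p) ^ w * y‖

/-- The minimal norm digit set modulo τ^w. -/
def DigitSet (q p : ℤ) (w : ℕ) : Set ℂ := {0} ∪ {η | IsNonzeroDigit q p w η}

/-- σ is a digit expansion of z with digits in the minimal norm digit set modulo τ^w. -/
def IsExpansion (q p : ℤ) (w : ℕ) (z : ℂ) (σ : ℕ → ℂ) : Prop :=
  (Function.support σ).Finite ∧ (∀ ℓ, σ ℓ ∈ DigitSet q p w) ∧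
    z = ∑ᶠ ℓ, σ ℓ * (tauC q p) ^ ℓ

/-- The (Hamming) weight of an expansion: the number of nonzero digits. -/
def expWeight (σ : ℕ → ℂ) : ℕ := (Function.support σ).ncard

/-- σ is a width-w non-adjacent form: among any w consecutive digits at most one
is nonzero. -/
def IsNAF (w : ℕ) (σ : ℕ → ℂ) : Prop :=
  ∀ ℓ i j : ℕ, i < w → j < w → σ (ℓ + i) ≠ 0 → σ (ℓ + j) ≠ 0 → i = j

/-- The Voronoi cell of 0 for ℤ[τ]. -/
def VoronoiV (q p : ℤ) : Set ℂ :=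
  {z | ∀ y ∈ Ztau q p, ‖z‖ ≤ ‖z - y‖}

/-- The vertex v₀ of the Voronoi cell. -/
def v0C (q p : ℤ) : ℂ :=
  (p : ℂ) / 2 + Complex.I * ((((q : ℝ) - 1/2) / Real.sqrt (4 * (q : ℝ) - 1) : ℝ) : ℂ)

/-- The vertex v₁ of the Voronoi cell. -/
def v1C (q : ℤ) : ℂ := Complex.I * (((q : ℝ) / Real.sqrt (4 * (q : ℝ) - 1) : ℝ) : ℂ)

/-- The direction d = p·i·τ/√q. -/
def dC (q p : ℤ) : ℂ := (p : ℂ) * Complex.I * tauC q p / ((Real.sqrt q : ℝ) : ℂ)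

/-- d_w = d·(τ/√q)^w. -/
def dwC (q p : ℤ) (w : ℕ) : ℂ := dC q p * (tauC q p / ((Real.sqrt q : ℝ) : ℂ)) ^ w

/-- The height s of the rectangle R_w. -/
def sHeight (q : ℤ) : ℝ := Real.sqrt (((q : ℝ) - 1/4) / ((q : ℝ) + 2))

/-- The open rectangle R_w. -/
def Rw (q p : ℤ) (w : ℕ) : Set ℂ :=
  {z | ∃ t u : ℝ,
    Real.sqrt q < t ∧ t < Real.sqrt ((q : ℝ) ^ (w + 1) / (4 * (q : ℝ) - 1)) - Real.sqrt q ∧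
    0 < u ∧ u < sHeight q ∧
    z = (tauC q p) ^ w * v0C q p + (t : ℂ) * dwC q p w
        - (p : ℂ) * Complex.I * (u : ℂ) * dwC q p w}

/-- The lattice Λ_{τ/2} = {(aτ + bτ²)/2 : a, b ∈ ℤ}. -/
def LambdaHalf (q p : ℤ) : Set ℂ :=
  {z | ∃ a b : ℤ, z = ((a : ℂ) * tauC q p + (b : ℂ) * (tauC q p) ^ 2) / 2}

/-- The unit e_w = τ^{w+1}/q^{(w+1)/2}. -/
def ewC (q p : ℤ) (w : ℕ) : ℂ :=
  (tauC q p) ^ (w + 1) / (((q : ℝ) ^ (((w : ℝ) + 1) / 2) : ℝ) : ℂ)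

/-- The closed rectangle R̃_NH (narrow but high). -/
def RNH (q p : ℤ) (w : ℕ) : Set ℂ :=
  {z | ∃ t u : ℝ,
    0 ≤ t ∧ t ≤ sHeight q / (4 * (q : ℝ)) ∧
    |u| ≤ (q : ℝ) ^ 2 * Real.sqrt ((q : ℝ) + 2) ∧
    z = (tauC q p) ^ (w + 1) / 2 + ewC q p w * ((t : ℂ) + Complex.I * (u : ℂ))}

/-- The closed rectangle R̃_WL (wide but low). -/
def RWL (q p : ℤ) (w : ℕ) : Set ℂ :=
  {z | ∃ t u : ℝ,
    0 ≤ t ∧ t ≤ 4 * (q : ℝ) ^ ((3 - (w : ℝ)) / 2) * ((q : ℝ) - 1/4) ∧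
    |u| ≤ (q : ℝ) ^ (((w : ℝ) + 1) / 2) / (16 * (q : ℝ) * Real.sqrt ((q : ℝ) - 1/4)) ∧
    z = (tauC q p) ^ (w + 1) / 2 + ewC q p w * ((t : ℂ) + Complex.I * (u : ℂ))}

section Stmt5Aux

open Polynomial

/-- Coordinate sequence: `tauC q p ^ w = (AB q p w).1 + (AB q p w).2 * tauC q p`. -/
def AB (q p : ℤ) : ℕ → ℤ × ℤ
  | 0 => (1, 0)
  | (w+1) => (-q * (AB q p w).2, (AB q p w).1 + p * (AB q p w).2)

lemma tau_sq (q p : ℤ) (hq : 2 ≤ q) (hp : p = -1 ∨ p = 1) :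
    tauC q p ^ 2 = (p : ℂ) * tauC q p - (q : ℂ) := by
  have h4 : (0:ℝ) ≤ (q:ℝ) - 1/4 := by
    have : (2:ℝ) ≤ (q:ℝ) := by exact_mod_cast hq
    linarith
  have hs : ((Real.sqrt ((q:ℝ) - 1/4) : ℝ) : ℂ)^2 = (q:ℂ) - 1/4 := by
    rw [← Complex.ofReal_pow, Real.sq_sqrt h4]
    push_cast; ring
  have hp2 : (p:ℂ)^2 = 1 := by rcases hp with h | h <;> simp [h]
  unfold tauC
  linear_combination (((Real.sqrt ((q:ℝ) - 1/4) : ℝ) : ℂ))^2 * Complex.I_sq - hs - (1/4 : ℂ) * hp2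

lemma tau_im (q p : ℤ) : (tauC q p).im = Real.sqrt ((q:ℝ) - 1/4) := by
  simp [tauC]

lemma sqrt_pos' (q : ℤ) (hq : 2 ≤ q) : 0 < Real.sqrt ((q:ℝ) - 1/4) := by
  apply Real.sqrt_pos.mpr
  have : (2:ℝ) ≤ (q:ℝ) := by exact_mod_cast hq
  linarith

lemma coord_inj (q p : ℤ) (hq : 2 ≤ q) {a b a' b' : ℤ}
    (h : (a:ℂ) + (b:ℂ) * tauC q p = (a':ℂ) + (b':ℂ) * tauC q p) : a = a' ∧ b = b' := by
  have hpos := sqrt_pos' q hq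
  have h2 := congrArg Complex.im h
  simp [Complex.add_im, Complex.mul_im, tau_im] at h2
  have hb : b = b' := by
    rcases h2 with h2 | h2
    · exact_mod_cast h2
    · exact absurd h2 (by simpa [one_div] using (ne_of_gt hpos))
  subst hb
  refine ⟨?_, rfl⟩
  have := add_right_cancel h
  exact_mod_cast this

lemma pow_eq (q p : ℤ) (hq : 2 ≤ q) (hp : p = -1 ∨ p = 1) :
    ∀ w : ℕ, tauC q p ^ w = ((AB q p w).1 : ℂ) + ((AB q p w).2 : ℂ) * tauC q p := by
  intro w
  induction w with
  | zero => simp [AB]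
  | succ n ih =>
    have ht := tau_sq q p hq hp
    rw [pow_succ, ih]
    show _ = ((AB q p (n+1)).1 : ℂ) + ((AB q p (n+1)).2 : ℂ) * tauC q p
    simp only [AB]
    push_cast
    linear_combination (((AB q p n).2 : ℂ)) * ht

lemma conj_tau (q p : ℤ) : (starRingEnd ℂ) (tauC q p) = (p:ℂ) - tauC q p := by
  unfold tauC
  simp only [map_add, map_mul, map_div₀, Complex.conj_I, Complex.conj_ofReal, map_intCast,
    map_ofNat]
  ring

lemma copr_p (q p : ℤ) (hp : p = -1 ∨ p = 1) : IsCoprime p q := by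
  rcases hp with h | h <;> subst h
  · exact (isCoprime_one_left).neg_left
  · exact isCoprime_one_left

lemma copr_Bq (q p : ℤ) (hp : p = -1 ∨ p = 1) :
    ∀ w : ℕ, IsCoprime ((AB q p (w+1)).2) q := by
  intro w
  induction w with
  | zero => simpa [AB] using isCoprime_one_left
  | succ n ih =>
    have h1 : IsCoprime (p * (AB q p (n+1)).2) q := (copr_p q p hp).mul_left ih
    have h2 := h1.add_mul_left_left (-(AB q p n).2)
    have h3 : p * (AB q p (n+1)).2 + q * -(AB q p n).2 = (AB q p (n+2)).2 := by
      show _ = (AB q p (n+1)).1 + p * (AB q p (n+1)).2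
      show _ = -q * (AB q p n).2 + p * (AB q p (n+1)).2
      ring
    rwa [h3] at h2

lemma copr_BB (q p : ℤ) (hp : p = -1 ∨ p = 1) :
    ∀ w : ℕ, IsCoprime ((AB q p (w+1)).2) ((AB q p w).2) := by
  intro w
  induction w with
  | zero => simpa [AB] using isCoprime_one_left
  | succ n ih =>
    have h1 : IsCoprime (-(q * (AB q p n).2)) ((AB q p (n+1)).2) :=
      (((copr_Bq q p hp n).symm.mul_left ih.symm)).neg_left
    have h2 := h1.add_mul_left_left p
    have h3 : -(q * (AB q p n).2) + (AB q p (n+1)).2 * p = (AB q p (n+2)).2 := by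
      show _ = (AB q p (n+1)).1 + p * (AB q p (n+1)).2
      show _ = -q * (AB q p n).2 + p * (AB q p (n+1)).2
      ring
    rwa [h3] at h2

lemma copr_AB (q p : ℤ) (hp : p = -1 ∨ p = 1) :
    ∀ w : ℕ, IsCoprime ((AB q p w).1) ((AB q p w).2) := by
  intro w
  cases w with
  | zero => simpa [AB] using isCoprime_one_left
  | succ n =>
    have h1 : IsCoprime (-(q * (AB q p n).2)) ((AB q p (n+1)).2) :=
      (((copr_Bq q p hp n).symm.mul_left (copr_BB q p hp n).symm)).neg_left
    have h3 : -(q * (AB q p n).2) = (AB q p (n+1)).1 := by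
      show _ = -q * (AB q p n).2
      ring
    rwa [h3] at h1

lemma span_eq_ker (ℓ : ℕ) (a : ℤ) :
    Ideal.span {(C (ℓ:ℤ) : ℤ[X]), X - C a} =
      RingHom.ker ((Int.castRingHom (ZMod ℓ)).comp (evalRingHom a)) := by
  apply le_antisymm
  · rw [Ideal.span_le]
    rintro g hg
    rcases hg with rfl | rfl
    · simp [RingHom.mem_ker, ZMod.intCast_zmod_eq_zero_iff_dvd]
    · simp [RingHom.mem_ker]
  · intro g hg
    rw [RingHom.mem_ker] at hg
    have hdvd : (ℓ:ℤ) ∣ g.eval a := by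
      simpa [ZMod.intCast_zmod_eq_zero_iff_dvd] using hg
    obtain ⟨k, hk⟩ := hdvd
    obtain ⟨h, hh⟩ := (X_sub_C_dvd_sub_C_eval : (X - C a : ℤ[X]) ∣ g - C (g.eval a))
    have hg' : g = (X - C a) * h + C (ℓ:ℤ) * C k := by
      rw [← C_mul, ← hk]
      linear_combination hh
    rw [hg']
    exact Ideal.add_mem _
      (Ideal.mul_mem_right _ _ (Ideal.subset_span (by simp)))
      (Ideal.mul_mem_right _ _ (Ideal.subset_span (by simp)))

end Stmt5Aux

set_option synthInstance.maxHeartbeats 1000000 in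
set_option maxHeartbeats 1000000 in
/-- splitting of primes dividing q in ℤ[τ], and coprimality of the
coordinates of τ^w and (conj τ)^w. -/
theorem stmt5 (q p : ℤ) (hq : 2 ≤ q) (hp : p = -1 ∨ p = 1) :
    (∀ ℓ : ℕ, ℓ.Prime → (ℓ : ℤ) ∣ q →
      ∃ P Q : Ideal (Algebra.adjoin ℤ ({tauC q p} : Set ℂ)),
        P.IsPrime ∧ Q.IsPrime ∧ P ≠ Q ∧
        Ideal.span {(ℓ : Algebra.adjoin ℤ ({tauC q p} : Set ℂ))} = P * Q) ∧
    (∀ w : ℕ, ∀ a b : ℤ,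
      ((a : ℂ) + (b : ℂ) * tauC q p = (tauC q p) ^ w ∨
        (a : ℂ) + (b : ℂ) * tauC q p = ((starRingEnd ℂ) (tauC q p)) ^ w) →
      Int.gcd a b = 1) := by
  constructor
  · -- Part 1
    intro ℓ hℓ hdvd
    haveI : Fact (ℓ.Prime) := ⟨hℓ⟩
    obtain ⟨m, hm⟩ := hdvd
    set R := Algebra.adjoin ℤ ({tauC q p} : Set ℂ) with hR
    set τ' : R := ⟨tauC q p, Algebra.subset_adjoin rfl⟩ with hτ'
    set ψ : Polynomial ℤ →+* R := (Polynomial.aeval τ' : Polynomial ℤ →ₐ[ℤ] R).toRingHom with hψ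
    have hψapp : ∀ g : Polynomial ℤ, ψ g = Polynomial.aeval τ' g := fun g => rfl
    have hval : ∀ g : Polynomial ℤ, ((ψ g : R) : ℂ) = Polynomial.aeval (tauC q p) g := by
      intro g
      have h := Polynomial.aeval_algHom_apply R.val τ' g
      rw [hψapp]
      exact h.symm
    have hsurj : Function.Surjective ψ := by
      rintro ⟨y, hy⟩
      rw [hR, Algebra.adjoin_singleton_eq_range_aeval] at hy
      obtain ⟨g, hg⟩ := hy
      exact ⟨g, Subtype.ext (by rw [hval g]; exact hg)⟩
    set f : Polynomial ℤ :=
      Polynomial.X^2 - Polynomial.C p * Polynomial.X + Polynomial.C q with hf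
    have hmonic : f.Monic := by
      have h1 : f = Polynomial.X ^ 2 + (Polynomial.C (-p) * Polynomial.X + Polynomial.C q) := by
        rw [hf]; push_cast [Polynomial.C_neg]; ring
      rw [h1]
      exact Polynomial.monic_X_pow_add
        (lt_of_le_of_lt Polynomial.degree_linear_le (by norm_num))
    have hfτ : Polynomial.aeval (tauC q p) f = 0 := by
      have ht := tau_sq q p hq hp
      simp only [hf, map_add, map_sub, map_mul, map_pow, Polynomial.aeval_X, Polynomial.aeval_C,
        algebraMap_int_eq, eq_intCast, map_intCast]
      linear_combination ht
    have hψf : ψ f = 0 := by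
      apply Subtype.ext
      rw [hval]
      simpa using hfτ
    -- the kernel of ψ is contained in (f)
    have hker : ∀ g : Polynomial ℤ, ψ g = 0 → f ∣ g := by
      intro g hg
      have hg0 : Polynomial.aeval (tauC q p) g = 0 := by
        rw [← hval g, hg]; simp
      rw [← Polynomial.modByMonic_eq_zero_iff_dvd hmonic]
      set r := g %ₘ f with hr
      have hrτ : Polynomial.aeval (tauC q p) r = 0 := by
        have h1 : r + f * (g /ₘ f) = g := Polynomial.modByMonic_add_div g f
        have h2 := congrArg (Polynomial.aeval (tauC q p)) h1
        simp only [map_add, map_mul, hfτ, zero_mul, add_zero, hg0] at h2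
        exact h2
      have hdeg : r.degree ≤ 1 := by
        have h1 : r.degree < f.degree := Polynomial.degree_modByMonic_lt g hmonic
        have h2 : f.degree = 2 := by
          rw [hf]
          compute_degree!
        rw [h2] at h1
        exact Order.le_of_lt_succ (by exact_mod_cast h1)
      have hform := Polynomial.eq_X_add_C_of_degree_le_one hdeg
      have h3 : ((r.coeff 0 : ℂ)) + (r.coeff 1 : ℂ) * tauC q p
          = ((0:ℤ):ℂ) + ((0:ℤ):ℂ) * tauC q p := by
        have := congrArg (Polynomial.aeval (tauC q p)) hform.symm
        simp only [map_add, map_mul, Polynomial.aeval_X, Polynomial.aeval_C,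
          algebraMap_int_eq, eq_intCast, map_intCast, hrτ] at this
        push_cast
        linear_combination this
      obtain ⟨h0, h1⟩ := coord_inj q p hq h3
      rw [hform, h0, h1]
      simp
    -- ideals upstairs
    set I : Ideal (Polynomial ℤ) :=
      Ideal.span {Polynomial.C (ℓ:ℤ), Polynomial.X} with hI
    set J : Ideal (Polynomial ℤ) :=
      Ideal.span {Polynomial.C (ℓ:ℤ), Polynomial.X - Polynomial.C p} with hJ
    have hI' : I = RingHom.ker ((Int.castRingHom (ZMod ℓ)).comp (Polynomial.evalRingHom 0)) := by
      rw [hI, ← span_eq_ker ℓ 0]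
      simp
    have hJ' : J = RingHom.ker ((Int.castRingHom (ZMod ℓ)).comp (Polynomial.evalRingHom p)) :=
      span_eq_ker ℓ p
    haveI hIprime : I.IsPrime := by rw [hI']; exact RingHom.ker_isPrime _
    haveI hJprime : J.IsPrime := by rw [hJ']; exact RingHom.ker_isPrime _
    have hfI : f ∈ I := by
      rw [hI', RingHom.mem_ker]
      simp [hf, hm, ZMod.intCast_zmod_eq_zero_iff_dvd]
    have hfJ : f ∈ J := by
      rw [hJ', RingHom.mem_ker]
      have : f.eval p = q := by simp [hf]; ring
      simp [this, hm, ZMod.intCast_zmod_eq_zero_iff_dvd]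
    have hkerI : RingHom.ker ψ ≤ I := by
      intro g hg
      obtain ⟨h, rfl⟩ := hker g (RingHom.mem_ker.mp hg)
      exact Ideal.mul_mem_right _ _ hfI
    have hkerJ : RingHom.ker ψ ≤ J := by
      intro g hg
      obtain ⟨h, rfl⟩ := hker g (RingHom.mem_ker.mp hg)
      exact Ideal.mul_mem_right _ _ hfJ
    refine ⟨I.map ψ, J.map ψ, Ideal.map_isPrime_of_surjective hsurj hkerI,
      Ideal.map_isPrime_of_surjective hsurj hkerJ, ?_, ?_⟩
    · -- P ≠ Q
      intro hPQ
      have hτP : (τ' : R) ∈ I.map ψ := by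
        have hX : (Polynomial.X : Polynomial ℤ) ∈ I := Ideal.subset_span (by simp)
        have := Ideal.mem_map_of_mem ψ hX
        simpa [hψapp] using this
      have hτQ : τ' - ((p:ℤ) : R) ∈ J.map ψ := by
        have hX : (Polynomial.X - Polynomial.C p : Polynomial ℤ) ∈ J :=
          Ideal.subset_span (by simp)
        have := Ideal.mem_map_of_mem ψ hX
        simpa [hψapp, map_sub, Polynomial.aeval_C, algebraMap_int_eq, eq_intCast] using this
      rw [← hPQ] at hτQ
      have hpP : ((p:ℤ) : R) ∈ I.map ψ := by
        have := Ideal.sub_mem _ hτP hτQ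
        simpa using this
      have h1 : (1 : R) ∈ I.map ψ := by
        have := Ideal.mul_mem_left _ ((p:ℤ) : R) hpP
        rcases hp with hp1 | hp1 <;> subst hp1 <;> simpa using this
      exact (Ideal.map_isPrime_of_surjective hsurj hkerI).ne_top
        ((Ideal.eq_top_iff_one _).mpr h1)
    · -- span {ℓ} = P * Q
      rw [← Ideal.map_mul]
      apply le_antisymm
      · rw [Ideal.span_le, Set.singleton_subset_iff]
        have hCl : (Polynomial.C (ℓ:ℤ) : Polynomial ℤ) ∈ I * J := by
          have h1 : (Polynomial.X * Polynomial.C (ℓ:ℤ) : Polynomial ℤ) ∈ I * J :=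
            Ideal.mul_mem_mul (Ideal.subset_span (by simp)) (Ideal.subset_span (by simp))
          have h2 : (Polynomial.C (ℓ:ℤ) * (Polynomial.X - Polynomial.C p) : Polynomial ℤ)
              ∈ I * J :=
            Ideal.mul_mem_mul (Ideal.subset_span (by simp)) (Ideal.subset_span (by simp))
          have h4 : (Polynomial.C (ℓ:ℤ) * Polynomial.C p : Polynomial ℤ) ∈ I * J := by
            have h3 := Ideal.sub_mem _ h1 h2
            have he : Polynomial.X * Polynomial.C (ℓ:ℤ)
                - Polynomial.C (ℓ:ℤ) * (Polynomial.X - Polynomial.C p)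
                = Polynomial.C (ℓ:ℤ) * Polynomial.C p := by ring
            rwa [he] at h3
          have h5 := Ideal.mul_mem_left _ (Polynomial.C p) h4
          have he2 : Polynomial.C p * (Polynomial.C (ℓ:ℤ) * Polynomial.C p)
              = Polynomial.C (ℓ:ℤ) := by
            rcases hp with h | h <;> subst h <;>
              simp [Polynomial.C_neg, Polynomial.C_1]
          rwa [he2] at h5
        have hmem := Ideal.mem_map_of_mem ψ hCl
        have hcast : ψ (Polynomial.C (ℓ:ℤ)) = ((ℓ:ℕ) : R) := by
          rw [hψapp]
          simp [Polynomial.aeval_C, algebraMap_int_eq, eq_intCast]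
        rwa [hcast] at hmem
      · have hIJ : I * J ≤ Ideal.span {Polynomial.C (ℓ:ℤ), f} := by
          rw [Ideal.mul_le]
          intro r hr s hs
          rw [hI, Ideal.mem_span_pair] at hr
          rw [hJ, Ideal.mem_span_pair] at hs
          obtain ⟨x, y, hxy⟩ := hr
          obtain ⟨x', y', hxy'⟩ := hs
          rw [Ideal.mem_span_pair]
          refine ⟨x * s + x' * y * Polynomial.X - y * y' * Polynomial.C m, y * y', ?_⟩
          have hq' : (Polynomial.C q : Polynomial ℤ) = Polynomial.C (ℓ:ℤ) * Polynomial.C m := by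
            rw [← Polynomial.C_mul, ← hm]
          rw [hf]
          linear_combination s * hxy + y * Polynomial.X * hxy' + (y * y' : Polynomial ℤ) * hq'
        calc Ideal.map ψ (I * J) ≤ Ideal.map ψ (Ideal.span {Polynomial.C (ℓ:ℤ), f}) :=
              Ideal.map_mono hIJ
          _ ≤ Ideal.span {((ℓ:ℕ) : R)} := by
              rw [Ideal.map_span, Ideal.span_le]
              rintro z hz
              simp only [Set.image_insert_eq, Set.image_singleton, Set.mem_insert_iff,
                Set.mem_singleton_iff] at hz
              rcases hz with rfl | rfl
              · apply Ideal.subset_span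
                simp only [Set.mem_singleton_iff]
                rw [hψapp]
                simp [Polynomial.aeval_C, algebraMap_int_eq, eq_intCast]
              · rw [hψf]
                exact Ideal.zero_mem _
  · -- Part 2
    intro w a b hab
    have hAB := copr_AB q p hp w
    rcases hab with h | h
    · rw [pow_eq q p hq hp w] at h
      obtain ⟨ha, hb⟩ := coord_inj q p hq h
      rw [ha, hb]
      exact Int.isCoprime_iff_gcd_eq_one.mp hAB
    · have h2 : ((starRingEnd ℂ) (tauC q p))^w
          = (((AB q p w).1 + (AB q p w).2 * p : ℤ) : ℂ)
            + ((-(AB q p w).2 : ℤ) : ℂ) * tauC q p := by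
        rw [← map_pow, pow_eq q p hq hp w]
        simp only [map_add, map_mul, map_intCast, conj_tau]
        push_cast
        ring
      rw [h2] at h
      obtain ⟨ha, hb⟩ := coord_inj q p hq h
      rw [ha, hb]
      refine Int.isCoprime_iff_gcd_eq_one.mp ?_
      exact (hAB.add_mul_left_left p).neg_right
end
end

section
/- For a real number x let ‖x‖ denote its distance to the nearest integer. Let ε = (2/π)·arg(τ) and, for fixed integers a, b with a + b·τ ≠ 0, let δ = (2/π)·arg(a + b·τ). Suppose w_q is a positive real number such that for all integers w ≥ w_q and all integers k, it is not the case that both |Log((a + b·τ)/|a + b·τ|) − w·Log(τ/|τ|) + k·i·π/2| < 9·q^{2 − w/2} and |a + b·τ| < 4·q² hold. Let Q be a positive integer and set κ = w_q·‖Q·ε‖; suppose 0 < κ < 1/4 and ‖Q·δ‖ > 2κ. Then for all integers w ≥ (2/log q)·log(18·Q/(κ·π)) + 4 and all integers k, it is not the case that both |Log((a + b·τ)/|a + b·τ|) − w·Log(τ/|τ|) + k·i·π/2| < 9·q^{2 − w/2} and |a + b·τ| < 4·q² hold (log is the natural logarithm). -/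
noncomputable section

open Complex

/-- Distance of a real number to the nearest integer. -/
def nearestIntDist (x : ℝ) : ℝ := |x - round x|

/-- The pair of inequalities (Main_Log_Form). -/
def MainIneq (q p a b k w : ℤ) : Prop :=
  ‖Complex.log (((a : ℂ) + (b : ℂ) * tauC q p) /
        ((‖(a : ℂ) + (b : ℂ) * tauC q p‖ : ℝ) : ℂ)) -
      (w : ℂ) * Complex.log (tauC q p / ((‖tauC q p‖ : ℝ) : ℂ)) +
      (k : ℂ) * Complex.I * (Real.pi : ℂ) / 2‖ <
    9 * (q : ℝ) ^ ((2 : ℝ) - (w : ℝ) / 2) ∧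
  ‖(a : ℂ) + (b : ℂ) * tauC q p‖ < 4 * (q : ℝ) ^ 2

/-- the Baker–Davenport reduction step. -/
theorem stmt9 (q p : ℤ) (hq : 2 ≤ q) (hp : p = -1 ∨ p = 1)
    (a b : ℤ) (hab : (a : ℂ) + (b : ℂ) * tauC q p ≠ 0)
    (wq : ℝ) (hwq : 0 < wq)
    (hwqbound : ∀ w k : ℤ, wq ≤ (w : ℝ) → ¬ MainIneq q p a b k w)
    (Q : ℕ) (hQ : 0 < Q) (κ : ℝ)
    (hκ : κ = wq * nearestIntDist ((Q : ℝ) * (2 / Real.pi * Complex.arg (tauC q p))))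
    (hκpos : 0 < κ) (hκlt : κ < 1/4)
    (hδ : 2 * κ <
      nearestIntDist ((Q : ℝ) * (2 / Real.pi * Complex.arg ((a : ℂ) + (b : ℂ) * tauC q p)))) :
    ∀ w k : ℤ,
      2 / Real.log q * Real.log (18 * (Q : ℝ) / (κ * Real.pi)) + 4 ≤ (w : ℝ) →
      ¬ MainIneq q p a b k w := by
  intro w k hw
  rcases le_or_gt wq (w : ℝ) with hcase | hcase
  · exact hwqbound w k hcase
  intro hmain
  have hπ : (0:ℝ) < Real.pi := Real.pi_pos
  have hπ4 : Real.pi < 4 := by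
    have := Real.pi_lt_d2; linarith
  have hQpos : (0:ℝ) < Q := by exact_mod_cast hQ
  have hQ1 : (1:ℝ) ≤ Q := by exact_mod_cast hQ
  have hq1 : (1:ℝ) < (q:ℝ) := by
    have : (2:ℝ) ≤ (q:ℝ) := by exact_mod_cast hq
    linarith
  have hqpos : (0:ℝ) < (q:ℝ) := by linarith
  have hlogq : 0 < Real.log q := Real.log_pos hq1
  have hCpos : (0:ℝ) < 18 * (Q:ℝ) / (κ * Real.pi) := by positivity
  -- w ≥ 4
  have hC1 : (1:ℝ) ≤ 18 * (Q:ℝ) / (κ * Real.pi) := by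
    rw [le_div_iff₀ (by positivity)]
    nlinarith
  have hlogC : 0 ≤ Real.log (18 * (Q:ℝ) / (κ * Real.pi)) := Real.log_nonneg hC1
  have hw4 : (4:ℝ) ≤ (w:ℝ) := by
    have : 0 ≤ 2 / Real.log q * Real.log (18 * (Q:ℝ) / (κ * Real.pi)) := by positivity
    linarith
  have hwpos : (0:ℝ) < (w:ℝ) := by linarith
  -- the rpow bound
  have hw' : Real.log (18 * (Q:ℝ) / (κ * Real.pi)) ≤ ((w:ℝ) - 4) * (Real.log q / 2) := by
    have h1 : 2 / Real.log q * Real.log (18 * (Q:ℝ) / (κ * Real.pi)) ≤ (w:ℝ) - 4 := by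
      linarith
    have h2 := mul_le_mul_of_nonneg_right h1
      (le_of_lt (by positivity : (0:ℝ) < Real.log q / 2))
    calc Real.log (18 * (Q:ℝ) / (κ * Real.pi))
        = 2 / Real.log q * Real.log (18 * (Q:ℝ) / (κ * Real.pi)) * (Real.log q / 2) := by
          field_simp
      _ ≤ _ := h2
  have hrpow : (q:ℝ) ^ ((2:ℝ) - (w:ℝ)/2) ≤ κ * Real.pi / (18 * (Q:ℝ)) := by
    rw [Real.rpow_def_of_pos hqpos]
    have hle : ((2:ℝ) - (w:ℝ)/2) * Real.log q ≤ - Real.log (18 * (Q:ℝ) / (κ * Real.pi)) := by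
      nlinarith
    calc Real.exp (Real.log q * ((2:ℝ) - (w:ℝ)/2))
        ≤ Real.exp (- Real.log (18 * (Q:ℝ) / (κ * Real.pi))) := Real.exp_le_exp.mpr (by linarith [hle])
      _ = (18 * (Q:ℝ) / (κ * Real.pi))⁻¹ := by rw [Real.exp_neg, Real.exp_log hCpos]
      _ = κ * Real.pi / (18 * (Q:ℝ)) := by
          rw [inv_div]
  -- notation
  set z := (a : ℂ) + (b : ℂ) * tauC q p with hz
  set τ := tauC q p with hτ
  have hτne : τ ≠ 0 := by
    intro h
    have him : τ.im = Real.sqrt ((q:ℝ) - 1/4) := by simp [hτ, tauC]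
    have h2 : (0:ℝ) < (q:ℝ) - 1/4 := by linarith
    have : Real.sqrt ((q:ℝ) - 1/4) = 0 := by rw [← him, h]; simp
    exact absurd this (ne_of_gt (Real.sqrt_pos.mpr h2))
  have keyz : (Complex.log (z / ((‖z‖ : ℝ) : ℂ))).im = Complex.arg z := by
    rw [Complex.log_im, div_eq_inv_mul, ← Complex.ofReal_inv]
    exact Complex.arg_real_mul z (inv_pos.mpr (norm_pos_iff.mpr hab))
  have keyτ : (Complex.log (τ / ((‖τ‖ : ℝ) : ℂ))).im = Complex.arg τ := by
    rw [Complex.log_im, div_eq_inv_mul, ← Complex.ofReal_inv]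
    exact Complex.arg_real_mul τ (inv_pos.mpr (norm_pos_iff.mpr hτne))
  -- imaginary part of the linear form
  have hEim : (Complex.log (z / ((‖z‖ : ℝ) : ℂ)) -
      (w : ℂ) * Complex.log (τ / ((‖τ‖ : ℝ) : ℂ)) +
      (k : ℂ) * Complex.I * (Real.pi : ℂ) / 2).im
      = Complex.arg z - (w:ℝ) * Complex.arg τ + (k:ℝ) * Real.pi / 2 := by
    simp [Complex.add_im, Complex.sub_im, Complex.mul_im, Complex.div_im, keyz, keyτ]
  have hIm : |Complex.arg z - (w:ℝ) * Complex.arg τ + (k:ℝ) * Real.pi / 2|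
      < 9 * (q:ℝ) ^ ((2:ℝ) - (w:ℝ)/2) := by
    calc |Complex.arg z - (w:ℝ) * Complex.arg τ + (k:ℝ) * Real.pi / 2|
        = |(Complex.log (z / ((‖z‖ : ℝ) : ℂ)) -
            (w : ℂ) * Complex.log (τ / ((‖τ‖ : ℝ) : ℂ)) +
            (k : ℂ) * Complex.I * (Real.pi : ℂ) / 2).im| := by rw [hEim]
      _ ≤ ‖Complex.log (z / ((‖z‖ : ℝ) : ℂ)) -
            (w : ℂ) * Complex.log (τ / ((‖τ‖ : ℝ) : ℂ)) +
            (k : ℂ) * Complex.I * (Real.pi : ℂ) / 2‖ := Complex.abs_im_le_norm _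
      _ < _ := hmain.1
  -- abbreviations for the real quantities
  set Qδ := (Q : ℝ) * (2 / Real.pi * Complex.arg z) with hQδ
  set Qε := (Q : ℝ) * (2 / Real.pi * Complex.arg τ) with hQε
  have hεdist : nearestIntDist Qε = κ / wq := by
    rw [hκ]; field_simp
  -- the scaled inequality
  have hscaled : |Qδ - (w:ℝ) * Qε + (Q:ℝ) * (k:ℝ)|
      < 18 * (Q:ℝ) / Real.pi * (q:ℝ) ^ ((2:ℝ) - (w:ℝ)/2) := by
    have heq : Qδ - (w:ℝ) * Qε + (Q:ℝ) * (k:ℝ)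
        = 2 * (Q:ℝ) / Real.pi *
          (Complex.arg z - (w:ℝ) * Complex.arg τ + (k:ℝ) * Real.pi / 2) := by
      rw [hQδ, hQε]; field_simp
    rw [heq, abs_mul, abs_of_pos (by positivity : (0:ℝ) < 2 * (Q:ℝ) / Real.pi)]
    calc 2 * (Q:ℝ) / Real.pi * |Complex.arg z - (w:ℝ) * Complex.arg τ + (k:ℝ) * Real.pi / 2|
        < 2 * (Q:ℝ) / Real.pi * (9 * (q:ℝ) ^ ((2:ℝ) - (w:ℝ)/2)) := by
          exact (mul_lt_mul_iff_right₀ (by positivity)).mpr hIm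
      _ = 18 * (Q:ℝ) / Real.pi * (q:ℝ) ^ ((2:ℝ) - (w:ℝ)/2) := by ring
  -- combine
  have hn : nearestIntDist Qδ ≤ |Qδ - ((w * round Qε - (Q:ℤ) * k : ℤ) : ℝ)| :=
    round_le Qδ _
  have hsplit : |Qδ - ((w * round Qε - (Q:ℤ) * k : ℤ) : ℝ)|
      ≤ |Qδ - (w:ℝ) * Qε + (Q:ℝ) * (k:ℝ)| + (w:ℝ) * |Qε - (round Qε : ℝ)| := by
    have heq : Qδ - ((w * round Qε - (Q:ℤ) * k : ℤ) : ℝ)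
        = (Qδ - (w:ℝ) * Qε + (Q:ℝ) * (k:ℝ)) + (w:ℝ) * (Qε - (round Qε : ℝ)) := by
      push_cast; ring
    rw [heq]
    calc |(Qδ - (w:ℝ) * Qε + (Q:ℝ) * (k:ℝ)) + (w:ℝ) * (Qε - (round Qε : ℝ))|
        ≤ |Qδ - (w:ℝ) * Qε + (Q:ℝ) * (k:ℝ)| + |(w:ℝ) * (Qε - (round Qε : ℝ))| :=
          abs_add_le _ _
      _ = _ := by rw [abs_mul, abs_of_pos hwpos]
  have hbound1 : 18 * (Q:ℝ) / Real.pi * (q:ℝ) ^ ((2:ℝ) - (w:ℝ)/2) ≤ κ := by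
    have := mul_le_mul_of_nonneg_left hrpow
      (le_of_lt (by positivity : (0:ℝ) < 18 * (Q:ℝ) / Real.pi))
    calc 18 * (Q:ℝ) / Real.pi * (q:ℝ) ^ ((2:ℝ) - (w:ℝ)/2)
        ≤ 18 * (Q:ℝ) / Real.pi * (κ * Real.pi / (18 * (Q:ℝ))) := this
      _ = κ := by field_simp
  have hbound2 : (w:ℝ) * |Qε - (round Qε : ℝ)| < κ := by
    have : |Qε - (round Qε : ℝ)| = κ / wq := hεdist
    rw [this]
    rw [mul_div_assoc] at *
    calc (w:ℝ) * (κ / wq) < wq * (κ / wq) := by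
          apply mul_lt_mul_of_pos_right hcase (by positivity)
      _ = κ := by field_simp
  have : nearestIntDist Qδ < 2 * κ := by
    calc nearestIntDist Qδ ≤ |Qδ - ((w * round Qε - (Q:ℤ) * k : ℤ) : ℝ)| := hn
      _ ≤ |Qδ - (w:ℝ) * Qε + (Q:ℝ) * (k:ℝ)| + (w:ℝ) * |Qε - (round Qε : ℝ)| := hsplit
      _ < 18 * (Q:ℝ) / Real.pi * (q:ℝ) ^ ((2:ℝ) - (w:ℝ)/2) + κ := by
          linarith [hscaled, hbound2]
      _ ≤ κ + κ := by linarith [hbound1]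
      _ = 2 * κ := by ring
  linarith [hδ, this]
end
end

section
/- Let w ≥ 2 be an integer. For every z ∈ ℤ[τ] not divisible by τ, there exists a unique u ∈ ℤ[τ] with u − z ∈ τ^w·ℤ[τ] such that |u| ≤ |u'| for every u' ∈ ℤ[τ] with u' − z ∈ τ^w·ℤ[τ]; that is, each residue class modulo τ^w not divisible by τ contains a unique element of minimal absolute value. -/
noncomputable section

open Complex

namespace Stmt13Aux

def vmul (q p : ℤ) (x y : ℤ × ℤ) : ℤ × ℤ :=
  (x.1 * y.1 - q * x.2 * y.2, x.1 * y.2 + x.2 * y.1 + p * x.2 * y.2)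

def NF (q p : ℤ) (x : ℤ × ℤ) : ℤ := x.1 ^ 2 + p * x.1 * x.2 + q * x.2 ^ 2

def BF (q p : ℤ) (x y : ℤ × ℤ) : ℤ :=
  2 * x.1 * y.1 + p * (x.1 * y.2 + x.2 * y.1) + 2 * q * x.2 * y.2

def Tv (q p : ℤ) : ℕ → ℤ × ℤ
  | 0 => (1, 0)
  | k + 1 => (-q * (Tv q p k).2, (Tv q p k).1 + p * (Tv q p k).2)

def iota (q p : ℤ) (x : ℤ × ℤ) : ℂ := (x.1 : ℂ) + (x.2 : ℂ) * tauC q p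

variable {q p : ℤ}

lemma hqr (hq : 2 ≤ q) : (0:ℝ) < (q:ℝ) - 1/4 := by
  have : (2:ℝ) ≤ (q:ℝ) := by exact_mod_cast hq
  linarith

lemma sqrt_sq (hq : 2 ≤ q) : (Real.sqrt ((q:ℝ) - 1/4)) ^ 2 = (q:ℝ) - 1/4 :=
  Real.sq_sqrt (le_of_lt (hqr hq))

lemma sqrt_pos (hq : 2 ≤ q) : 0 < Real.sqrt ((q:ℝ) - 1/4) :=
  Real.sqrt_pos.mpr (hqr hq)

lemma tau_im : (tauC q p).im = Real.sqrt ((q:ℝ) - 1/4) := by simp [tauC]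

lemma tau_re : (tauC q p).re = (p:ℝ)/2 := by simp [tauC]

lemma tsq (hq : 2 ≤ q) (hp2 : p ^ 2 = 1) : (tauC q p) ^ 2 = (p:ℂ) * tauC q p - (q:ℂ) := by
  have h1 : ((Real.sqrt ((q:ℝ) - 1/4) : ℝ) : ℂ) ^ 2 = ((q:ℝ) - 1/4 : ℝ) := by
    norm_cast
    exact sqrt_sq hq
  have h2 : ((p:ℂ)) ^ 2 = 1 := by exact_mod_cast congrArg (fun n : ℤ => (n:ℂ)) hp2
  unfold tauC
  push_cast at h1 ⊢
  linear_combination ((q:ℂ) - 1/4) * Complex.I_sq + Complex.I ^ 2 * h1 + (-1/4 : ℂ) * h2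

lemma iota_im (x : ℤ × ℤ) : (iota q p x).im = (x.2 : ℝ) * Real.sqrt ((q:ℝ) - 1/4) := by
  simp [iota, tau_im, tau_re]

lemma iota_re (x : ℤ × ℤ) : (iota q p x).re = (x.1 : ℝ) + (x.2 : ℝ) * ((p:ℝ)/2) := by
  simp [iota, tau_im, tau_re]

lemma iota_inj (hq : 2 ≤ q) {x y : ℤ × ℤ} (h : iota q p x = iota q p y) : x = y := by
  have h2 : x.2 = y.2 := by
    have := congrArg Complex.im h
    rw [iota_im, iota_im] at this
    have hs := sqrt_pos (q := q) hq
    have h' : (x.2 : ℝ) = (y.2 : ℝ) := mul_right_cancel₀ (ne_of_gt hs) this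
    exact_mod_cast h'
  have h1 : x.1 = y.1 := by
    have := congrArg Complex.re h
    rw [iota_re, iota_re, h2] at this
    have : (x.1 : ℝ) = (y.1 : ℝ) := by linarith
    exact_mod_cast this
  exact Prod.ext h1 h2

lemma iota_add (x y : ℤ × ℤ) : iota q p (x + y) = iota q p x + iota q p y := by
  simp [iota, Prod.fst_add, Prod.snd_add]
  push_cast
  ring

lemma iota_sub (x y : ℤ × ℤ) : iota q p (x - y) = iota q p x - iota q p y := by
  simp [iota, Prod.fst_sub, Prod.snd_sub]
  push_cast
  ring

lemma iota_mul (hq : 2 ≤ q) (hp2 : p ^ 2 = 1) (x y : ℤ × ℤ) :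
    iota q p (vmul q p x y) = iota q p x * iota q p y := by
  simp only [iota, vmul]
  push_cast
  linear_combination (-(x.2 : ℂ)) * (y.2 : ℂ) * tsq hq hp2

lemma iota_tau : iota q p (0, 1) = tauC q p := by simp [iota]

lemma Tv_succ (k : ℕ) : Tv q p (k + 1) = vmul q p (Tv q p k) (0, 1) := by
  simp [Tv, vmul]

lemma iota_Tv (hq : 2 ≤ q) (hp2 : p ^ 2 = 1) (k : ℕ) :
    iota q p (Tv q p k) = (tauC q p) ^ k := by
  induction k with
  | zero => simp [iota, Tv]
  | succ n ih =>
    rw [Tv_succ, iota_mul hq hp2, ih, iota_tau, pow_succ]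

lemma normSq_iota (hq : 2 ≤ q) (hp2 : p ^ 2 = 1) (x : ℤ × ℤ) :
    Complex.normSq (iota q p x) = ((NF q p x : ℤ) : ℝ) := by
  rw [Complex.normSq_apply, iota_re, iota_im]
  have h1 : (Real.sqrt ((q:ℝ) - 1/4)) ^ 2 = (q:ℝ) - 1/4 := sqrt_sq hq
  have h2 : ((p:ℝ)) ^ 2 = 1 := by exact_mod_cast congrArg (fun n : ℤ => (n:ℝ)) hp2
  simp only [NF]
  push_cast
  linear_combination ((x.2:ℝ))^2 * h1 + ((x.2:ℝ))^2/4 * h2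

lemma NF_nonneg (hq : 2 ≤ q) (hp2 : p ^ 2 = 1) (x : ℤ × ℤ) : 0 ≤ NF q p x := by
  have := Complex.normSq_nonneg (iota q p x)
  rw [normSq_iota hq hp2] at this
  exact_mod_cast this

lemma abs_le_abs_iff (hq : 2 ≤ q) (hp2 : p ^ 2 = 1) (x y : ℤ × ℤ) :
    ‖iota q p x‖ ≤ ‖iota q p y‖ ↔ NF q p x ≤ NF q p y := by
  rw [Complex.norm_def, Complex.norm_def,
    Real.sqrt_le_sqrt_iff (Complex.normSq_nonneg _), normSq_iota hq hp2, normSq_iota hq hp2]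
  exact_mod_cast Int.cast_le

lemma mem_Ztau_iff {z : ℂ} : z ∈ Ztau q p ↔ ∃ x : ℤ × ℤ, z = iota q p x := by
  constructor
  · rintro ⟨a, b, rfl⟩; exact ⟨(a, b), rfl⟩
  · rintro ⟨⟨a, b⟩, rfl⟩; exact ⟨a, b, rfl⟩

lemma tau_dvd_iff (hq : 2 ≤ q) (hp2 : p ^ 2 = 1) (x : ℤ × ℤ) :
    tauPowDvd q p 1 (iota q p x) ↔ q ∣ x.1 := by
  constructor
  · rintro ⟨u, hu, hux⟩
    rcases mem_Ztau_iff.mp hu with ⟨y, rfl⟩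
    rw [pow_one, ← iota_tau, ← iota_mul hq hp2] at hux
    have := iota_inj hq hux
    have h1 : x.1 = -q * y.2 := by
      have := congrArg Prod.fst this
      simpa [vmul] using this
    exact ⟨-y.2, by linarith [h1]⟩
  · rintro ⟨m, hm⟩
    refine ⟨iota q p (x.2 + p * m, -m), mem_Ztau_iff.mpr ⟨_, rfl⟩, ?_⟩
    rw [pow_one, ← iota_tau, ← iota_mul hq hp2]
    congr 1
    simp only [vmul, Prod.ext_iff]
    refine ⟨by simp; omega, by push_cast; ring⟩

end Stmt13Aux

namespace Stmt13Aux
variable {q p : ℤ}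

lemma NF_add (x y : ℤ × ℤ) : NF q p (x + y) = NF q p x + BF q p x y + NF q p y := by
  simp only [NF, BF, Prod.fst_add, Prod.snd_add]; ring

lemma NF_vmul (hp : p = -1 ∨ p = 1) (x y : ℤ × ℤ) :
    NF q p (vmul q p x y) = NF q p x * NF q p y := by
  rcases hp with rfl | rfl <;> simp only [NF, vmul] <;> ring

lemma NF_Tv (hp : p = -1 ∨ p = 1) (k : ℕ) : NF q p (Tv q p k) = q ^ k := by
  induction k with
  | zero => simp [Tv, NF]
  | succ n ih =>
    rw [Tv_succ, NF_vmul hp, ih]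
    simp [NF, pow_succ]

lemma vmul_add (t x y : ℤ × ℤ) : vmul q p t (x + y) = vmul q p t x + vmul q p t y := by
  simp only [vmul, Prod.fst_add, Prod.snd_add, Prod.ext_iff]
  constructor <;> ring

lemma vmul_sub (t x y : ℤ × ℤ) : vmul q p t (x - y) = vmul q p t x - vmul q p t y := by
  simp only [vmul, Prod.fst_sub, Prod.snd_sub, Prod.ext_iff]
  constructor <;> ring

lemma BF_vmul_expand (t x u : ℤ × ℤ) :
    BF q p u (vmul q p t x) =
      x.1 * BF q p u t + x.2 * BF q p u (-q * t.2, t.1 + p * t.2) := by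
  simp only [BF, vmul]; ring

lemma Tv_one : Tv q p 1 = (0, 1) := by simp [Tv]

lemma Tv_fst_dvd (k : ℕ) : q ∣ (Tv q p (k + 1)).1 := ⟨-(Tv q p k).2, by simp [Tv]⟩

lemma Tv_snd_mod (k : ℕ) : q ∣ ((Tv q p (k + 1)).2 - p ^ k) := by
  induction k with
  | zero => simp [Tv]
  | succ n ih =>
    have h1 : (Tv q p (n + 2)).2 = (Tv q p (n + 1)).1 + p * (Tv q p (n + 1)).2 := by
      simp [Tv]
    rcases Tv_fst_dvd (q := q) (p := p) n with ⟨m, hm⟩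
    rcases ih with ⟨r, hr⟩
    exact ⟨m + p * r, by rw [h1, hm]; linear_combination p * hr⟩

/-- The expansion of the norm of a shifted element. -/
lemma expand (hp : p = -1 ∨ p = 1) (w : ℕ) (u x : ℤ × ℤ) :
    NF q p (u + vmul q p (Tv q p w) x) =
      NF q p u + x.1 * BF q p u (Tv q p w) + x.2 * BF q p u (Tv q p (w+1))
        + q ^ w * NF q p x := by
  rw [NF_add, NF_vmul hp, NF_Tv hp, BF_vmul_expand]
  have : Tv q p (w + 1) = (-q * (Tv q p w).2, (Tv q p w).1 + p * (Tv q p w).2) := by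
    simp [Tv]
  rw [this]
  ring

end Stmt13Aux

namespace Stmt13Aux
variable {q p : ℤ}

lemma nn_of_mul {Q X : ℤ} (hQ : 0 < Q) (h : 0 ≤ Q * X) : 0 ≤ X := by
  by_contra h'
  push_neg at h'
  nlinarith [mul_pos hQ (by linarith : (0:ℤ) < -X)]

lemma unit_cancel {a : ℤ} (hp2 : p ^ 2 = 1) (k : ℕ) (h : q ∣ p ^ k * a) : q ∣ a := by
  have h2 : q ∣ p ^ k * (p ^ k * a) := Dvd.dvd.mul_left h _
  have h3 : p ^ k * (p ^ k * a) = (p ^ 2) ^ k * a := by ring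
  rwa [h3, hp2, one_pow, one_mul] at h2

set_option maxHeartbeats 1000000 in
lemma key (hq : 2 ≤ q) (hp : p = -1 ∨ p = 1) (v : ℕ) (u : ℤ × ℤ) (c d : ℤ)
    (ha : ¬ (q ∣ u.1))
    (hmin : ∀ x : ℤ × ℤ, NF q p u ≤ NF q p (u + vmul q p (Tv q p (v+2)) x))
    (hmin' : ∀ x : ℤ × ℤ, NF q p (u + vmul q p (Tv q p (v+2)) (c, d)) ≤
      NF q p (u + vmul q p (Tv q p (v+2)) ((c, d) + x)))
    (heq : NF q p u = NF q p (u + vmul q p (Tv q p (v+2)) (c, d))) :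
    c = 0 ∧ d = 0 := by
  have hp2 : p ^ 2 = 1 := by rcases hp with rfl | rfl <;> norm_num
  set a := u.1 with haa
  set b := u.2 with hbb
  set S₁ := BF q p u (Tv q p (v+2)) with hS₁
  set S₂ := BF q p u (Tv q p (v+3)) with hS₂
  have hQpos : (0:ℤ) < q ^ (v+2) := pow_pos (by omega) _
  have hqQ : q ∣ q ^ (v+2) := dvd_pow_self q (by omega)
  have hex : ∀ x : ℤ × ℤ, NF q p (u + vmul q p (Tv q p (v+2)) x) =
      NF q p u + x.1 * S₁ + x.2 * S₂ + q ^ (v+2) * NF q p x := fun x => expand hp (v+2) u x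
  have m1 : ∀ x : ℤ × ℤ, 0 ≤ x.1 * S₁ + x.2 * S₂ + q ^ (v+2) * NF q p x := by
    intro x
    have h := hmin x
    rw [hex x] at h
    linarith
  have m2 : ∀ x : ℤ × ℤ,
      0 ≤ x.1 * S₁ + x.2 * S₂ + q ^ (v+2) * (NF q p ((c,d)+x) - NF q p (c,d)) := by
    intro x
    have h := hmin' x
    rw [hex ((c,d)+x), hex (c,d)] at h
    simp only [Prod.fst_add, Prod.snd_add] at h
    have hx1 : ((c,d) + x).1 = c + x.1 := rfl
    have hx2 : ((c,d) + x).2 = d + x.2 := rfl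
    linarith
  have h10 : 0 ≤ S₁ + q ^ (v+2) := by
    have h := m1 (1, 0)
    have hn : NF q p (1, 0) = 1 := by simp [NF]
    rw [hn] at h; simp at h; linarith
  have h11 : 0 ≤ -S₁ + q ^ (v+2) := by
    have h := m1 (-1, 0)
    have hn : NF q p (-1, 0) = 1 := by simp [NF]
    rw [hn] at h; simp at h; linarith
  have h20 : 0 ≤ S₂ + q ^ (v+2) * q := by
    have h := m1 (0, 1)
    have hn : NF q p (0, 1) = q := by simp [NF]
    rw [hn] at h; simp at h; linarith
  have h21 : 0 ≤ -S₂ + q ^ (v+2) * q := by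
    have h := m1 (0, -1)
    have hn : NF q p (0, -1) = q := by simp [NF]
    rw [hn] at h; simp at h; linarith
  have h30 : 0 ≤ S₁ + q ^ (v+2) * (2*c + p*d + 1) := by
    have h := m2 (1, 0)
    have hn : NF q p ((c,d) + (1,0)) - NF q p (c,d) = 2*c + p*d + 1 := by
      simp only [Prod.mk_add_mk, NF]; ring
    rw [hn] at h; simp at h; linarith
  have h31 : 0 ≤ -S₁ + q ^ (v+2) * (-(2*c + p*d) + 1) := by
    have h := m2 (-1, 0)
    have hn : NF q p ((c,d) + (-1,0)) - NF q p (c,d) = -(2*c + p*d) + 1 := by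
      simp only [Prod.mk_add_mk, NF]; ring
    rw [hn] at h; simp at h; linarith
  have h40 : 0 ≤ S₂ + q ^ (v+2) * (p*c + 2*q*d + q) := by
    have h := m2 (0, 1)
    have hn : NF q p ((c,d) + (0,1)) - NF q p (c,d) = p*c + 2*q*d + q := by
      simp only [Prod.mk_add_mk, NF]; ring
    rw [hn] at h; simp at h; linarith
  have h41 : 0 ≤ -S₂ + q ^ (v+2) * (-(p*c + 2*q*d) + q) := by
    have h := m2 (0, -1)
    have hn : NF q p ((c,d) + (0,-1)) - NF q p (c,d) = -(p*c + 2*q*d) + q := by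
      simp only [Prod.mk_add_mk, NF]; ring
    rw [hn] at h; simp at h; linarith
  have g3a : 0 ≤ 2*c + p*d + 2 :=
    nn_of_mul hQpos (by nlinarith [h30, h11] : (0:ℤ) ≤ q ^ (v+2) * (2*c + p*d + 2))
  have g3b : 2*c + p*d ≤ 2 := by
    have := nn_of_mul hQpos (by nlinarith [h31, h10] : (0:ℤ) ≤ q ^ (v+2) * (-(2*c + p*d) + 2))
    linarith
  have g4a : 0 ≤ p*c + 2*q*d + 2*q :=
    nn_of_mul hQpos (by nlinarith [h40, h21] : (0:ℤ) ≤ q ^ (v+2) * (p*c + 2*q*d + 2*q))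
  have g4b : p*c + 2*q*d ≤ 2*q := by
    have := nn_of_mul hQpos (by nlinarith [h41, h20] : (0:ℤ) ≤ q ^ (v+2) * (-(p*c + 2*q*d) + 2*q))
    linarith
  have hE : c * S₁ + d * S₂ + q ^ (v+2) * NF q p (c, d) = 0 := by
    have h := heq; rw [hex (c,d)] at h; linarith
  obtain ⟨mA, hA⟩ : q ∣ (Tv q p (v+2)).1 := Tv_fst_dvd (v+1)
  obtain ⟨nB, hB⟩ : q ∣ ((Tv q p (v+2)).2 - p ^ (v+1)) := Tv_snd_mod (v+1)
  obtain ⟨nB', hB'⟩ : q ∣ ((Tv q p (v+1)).2 - p ^ v) := Tv_snd_mod v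
  have hTv3 : Tv q p (v+3) = (-q * (Tv q p (v+2)).2,
      (Tv q p (v+2)).1 + p * (Tv q p (v+2)).2) := by simp [Tv]
  set A := (Tv q p (v+2)).1 with hAdef
  set B := (Tv q p (v+2)).2 with hBdef
  set B' := (Tv q p (v+1)).2 with hB'def
  have hTv2A : A = -q * B' := by rw [hAdef, hB'def]; simp [Tv]
  have hc1 : q ∣ S₁ - p ^ (v+2) * a := by
    refine ⟨2*a*mA + p*a*nB + p*b*mA + 2*b*B, ?_⟩
    rw [hS₁]
    simp only [BF, ← haa, ← hbb, ← hAdef, ← hBdef]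
    linear_combination (2*a + p*b) * hA + (p*a) * hB
  have hc2 : q ∣ S₂ - p ^ (v+1) * a := by
    refine ⟨-2*a*B + p*a*mA + a*nB - p*b*B + 2*b*(A + p*B), ?_⟩
    rw [hS₂, hTv3]
    simp only [BF, ← haa, ← hbb, ← hAdef, ← hBdef]
    linear_combination (p*a) * hA + a * hB + (a*B) * hp2
  have hqd : q ∣ c * S₁ + d * S₂ := by
    have h : c * S₁ + d * S₂ = -(q ^ (v+2) * NF q p (c, d)) := by linarith
    rw [h]
    exact dvd_neg.mpr (Dvd.dvd.mul_right hqQ _)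
  have hmain : q ∣ a * (c + p * d) := by
    have h1 : q ∣ c * (S₁ - p ^ (v+2) * a) + d * (S₂ - p ^ (v+1) * a) :=
      dvd_add (Dvd.dvd.mul_left hc1 c) (Dvd.dvd.mul_left hc2 d)
    have h2 : q ∣ p ^ (v+1) * (a * (p * c + d)) := by
      have h3 : p ^ (v+1) * (a * (p * c + d)) =
          (c * S₁ + d * S₂) - (c * (S₁ - p ^ (v+2) * a) + d * (S₂ - p ^ (v+1) * a)) := by
        ring
      rw [h3]
      exact dvd_sub hqd h1
    have h4 : q ∣ a * (p * c + d) := unit_cancel hp2 (v+1) h2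
    have h5 : q ∣ p * (a * (p * c + d)) := Dvd.dvd.mul_left h4 p
    have h6 : p * (a * (p * c + d)) = (p ^ 2 - 1) * (a * c) + a * (c + p * d) := by ring
    rw [h6, hp2] at h5
    simpa using h5
  -- the hard "bad" case
  have hbad : ∀ e : ℤ, e = -1 ∨ e = 1 → c = -e → d = p * e → q ∣ a := by
    intro e he hce hde
    have he2 : e ^ 2 = 1 := by rcases he with rfl | rfl <;> norm_num
    have hNF : NF q p (c, d) = q := by
      simp only [NF, hce, hde]
      linear_combination (q * e^2 - e^2) * hp2 + q * he2
    have hid : -S₁ + p*S₂ = q * (B'*(a + p*b - 2*p*q*b) - B*(b + 2*p*a)) := by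
      rw [hS₁, hS₂, hTv3]
      simp only [BF, ← haa, ← hbb, ← hAdef, ← hBdef]
      linear_combination (a*A + p*a*B + q*b*B) * hp2 + (-(a + p*b - 2*p*q*b)) * hTv2A
    have hEe : -S₁ + p*S₂ = -e * q^(v+3) := by
      have h1 : c * S₁ + d * S₂ = -(q^(v+2) * q) := by rw [hNF] at hE; linarith
      have h2 : e * (c * S₁ + d * S₂) = -S₁ + p * S₂ := by
        rw [hce, hde]; linear_combination (p*S₂ - S₁) * he2
      rw [h1] at h2
      rw [← h2]; ring
    set K := B'*(a + p*b - 2*p*q*b) - B*(b + 2*p*a) with hK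
    have hKval : K = -e * q^(v+2) := by
      have h1 : q * K = q * (-e * q^(v+2)) := by
        rw [← hid, hEe]; ring
      exact mul_left_cancel₀ (by omega : (q:ℤ) ≠ 0) h1
    have hKa : q ∣ K + p^v * a := by
      refine ⟨nB'*(a + p*b - 2*p*q*b) - nB*(b + 2*p*a) - 2*p^(v+1)*b, ?_⟩
      rw [hK]
      linear_combination (a + p*b - 2*p*q*b) * hB' + (-(b + 2*p*a)) * hB + (-2*p^v*a) * hp2
    have hKdvd : q ∣ K := by
      rw [hKval]
      exact Dvd.dvd.mul_left hqQ (-e)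
    have hpa : q ∣ p^v * a := by
      have := dvd_sub hKa hKdvd
      simpa using this
    exact unit_cancel hp2 v hpa
  -- case analysis on (c, d)
  obtain ⟨e, hedef⟩ : ∃ e : ℤ, p * d = e := ⟨p * d, rfl⟩
  rw [hedef] at g3a g3b hmain
  have hd : d = p * e := by rw [← hedef]; linear_combination (-d) * hp2
  have hg4 : -(2*q) ≤ c + 2*q*e ∧ c + 2*q*e ≤ 2*q := by
    rcases hp with rfl | rfl <;>
      constructor <;> [skip; skip; skip; skip] <;> nlinarith [g4a, g4b, hedef]
  have hdb : -1 ≤ e ∧ e ≤ 1 := by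
    constructor
    · by_contra h'
      push_neg at h'
      nlinarith [hg4.1, hg4.2, g3a, g3b, hq,
        mul_nonneg (by linarith : (0:ℤ) ≤ -e - 2) (by linarith : (0:ℤ) ≤ q - 2)]
    · by_contra h'
      push_neg at h'
      nlinarith [hg4.1, hg4.2, g3a, g3b, hq,
        mul_nonneg (by linarith : (0:ℤ) ≤ e - 2) (by linarith : (0:ℤ) ≤ q - 2)]
  by_contra hcd
  have hdc : e = -1 ∨ e = 0 ∨ e = 1 := by omega
  rcases hdc with rfl | rfl | rfl
  · -- e = -1 : c ∈ {0, 1}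
    have hc : c = 0 ∨ c = 1 := by omega
    rcases hc with rfl | rfl
    · refine absurd ?_ ha
      have := hmain; norm_num at this
      simpa using this
    · exact absurd (hbad (-1) (Or.inl rfl) (by norm_num) hd) ha
  · -- e = 0 : d = 0, c = ±1
    have hd0 : d = 0 := by simpa using hd
    have hc : c = -1 ∨ c = 0 ∨ c = 1 := by omega
    rcases hc with rfl | rfl | rfl
    · refine absurd ?_ ha
      have := hmain; norm_num at this
      simpa using this
    · exact hcd ⟨rfl, hd0⟩
    · refine absurd ?_ ha
      have := hmain; norm_num at this
      simpa using this
  · -- e = 1 : c ∈ {-1, 0}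
    have hc : c = -1 ∨ c = 0 := by omega
    rcases hc with rfl | rfl
    · exact absurd (hbad 1 (Or.inr rfl) (by norm_num) hd) ha
    · refine absurd ?_ ha
      have := hmain; norm_num at this
      simpa using this

end Stmt13Aux

namespace Stmt13Aux
variable {q p : ℤ}

lemma vmul_zero (x : ℤ × ℤ) : vmul q p x 0 = 0 := by
  simp [vmul, Prod.ext_iff]

lemma class_repr (hq : 2 ≤ q) (hp2 : p ^ 2 = 1) {z₀ : ℤ × ℤ} {u' : ℂ} (k : ℕ)
    (h2 : ∃ y ∈ Ztau q p, u' - iota q p z₀ = (tauC q p) ^ k * y) :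
    ∃ y₀ : ℤ × ℤ, u' = iota q p (z₀ + vmul q p (Tv q p k) y₀) := by
  obtain ⟨y, hy, he⟩ := h2
  obtain ⟨y₀, rfl⟩ := mem_Ztau_iff.mp hy
  refine ⟨y₀, ?_⟩
  rw [iota_add, iota_mul hq hp2, iota_Tv hq hp2]
  linear_combination he

lemma class_mem (hq : 2 ≤ q) (hp2 : p ^ 2 = 1) (z₀ y₀ : ℤ × ℤ) (k : ℕ) :
    iota q p (z₀ + vmul q p (Tv q p k) y₀) ∈ Ztau q p ∧
      ∃ y ∈ Ztau q p,
        iota q p (z₀ + vmul q p (Tv q p k) y₀) - iota q p z₀ = (tauC q p) ^ k * y := by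
  refine ⟨mem_Ztau_iff.mpr ⟨_, rfl⟩, iota q p y₀, mem_Ztau_iff.mpr ⟨_, rfl⟩, ?_⟩
  rw [iota_add, iota_mul hq hp2, iota_Tv hq hp2]
  ring

end Stmt13Aux


open Stmt13Aux in
/-- each residue class modulo τ^w not divisible by τ contains a
unique element of minimal absolute value. -/
theorem stmt13 (q p : ℤ) (hq : 2 ≤ q) (hp : p = -1 ∨ p = 1) (w : ℕ) (hw : 2 ≤ w)
    (z : ℂ) (hz : z ∈ Ztau q p) (hnd : ¬ tauPowDvd q p 1 z) :
    ∃! u : ℂ, u ∈ Ztau q p ∧ (∃ y ∈ Ztau q p, u - z = (tauC q p) ^ w * y) ∧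
      ∀ u' ∈ Ztau q p, (∃ y ∈ Ztau q p, u' - z = (tauC q p) ^ w * y) →
        ‖u‖ ≤ ‖u'‖ := by
  classical
  have hp2 : p ^ 2 = 1 := by rcases hp with rfl | rfl <;> norm_num
  obtain ⟨v, rfl⟩ : ∃ v, w = v + 2 := ⟨w - 2, by omega⟩
  obtain ⟨z₀, rfl⟩ := Stmt13Aux.mem_Ztau_iff.mp hz
  have hza : ¬ ((q:ℤ) ∣ z₀.1) := fun h => hnd ((tau_dvd_iff hq hp2 z₀).mpr h)
  set Tw := Tv q p (v+2) with hTw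
  set S : Set ℕ := {n | ∃ x : ℤ × ℤ, NF q p (z₀ + vmul q p Tw x) = (n : ℤ)} with hS
  have hS0 : (NF q p z₀).toNat ∈ S :=
    ⟨0, by rw [vmul_zero, add_zero, Int.toNat_of_nonneg (NF_nonneg hq hp2 z₀)]⟩
  obtain ⟨v₀, hv₀⟩ := Nat.sInf_mem (⟨_, hS0⟩ : S.Nonempty)
  set u₀ := z₀ + vmul q p Tw v₀ with hu₀
  have hNFmin : ∀ x : ℤ × ℤ, NF q p u₀ ≤ NF q p (z₀ + vmul q p Tw x) := by
    intro x
    have h1 : (NF q p (z₀ + vmul q p Tw x)).toNat ∈ S :=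
      ⟨x, (Int.toNat_of_nonneg (NF_nonneg hq hp2 _)).symm⟩
    have h2 := Nat.sInf_le h1
    have h3 : (0:ℤ) ≤ NF q p (z₀ + vmul q p Tw x) := NF_nonneg hq hp2 _
    rw [hu₀, hv₀]
    omega
  have hprop : iota q p u₀ ∈ Ztau q p ∧
      (∃ y ∈ Ztau q p, iota q p u₀ - iota q p z₀ = (tauC q p) ^ (v+2) * y) ∧
      ∀ u' ∈ Ztau q p, (∃ y ∈ Ztau q p, u' - iota q p z₀ = (tauC q p) ^ (v+2) * y) →
        ‖iota q p u₀‖ ≤ ‖u'‖ := by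
    refine ⟨(class_mem hq hp2 z₀ v₀ (v+2)).1, (class_mem hq hp2 z₀ v₀ (v+2)).2, ?_⟩
    intro u' _ h2
    obtain ⟨y₀, rfl⟩ := class_repr hq hp2 (v+2) h2
    rw [abs_le_abs_iff hq hp2]
    exact hNFmin y₀
  refine ⟨iota q p u₀, hprop, ?_⟩
  rintro u'' ⟨h1'', h2'', h3''⟩
  obtain ⟨y₀, rfl⟩ := class_repr hq hp2 (v+2) h2''
  have e1 : ‖iota q p u₀‖ ≤ ‖iota q p (z₀ + vmul q p Tw y₀)‖ :=
    hprop.2.2 _ h1'' h2''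
  have e2 : ‖iota q p (z₀ + vmul q p Tw y₀)‖ ≤ ‖iota q p u₀‖ :=
    h3'' _ hprop.1 hprop.2.1
  have heqNF : NF q p u₀ = NF q p (z₀ + vmul q p Tw y₀) :=
    le_antisymm ((abs_le_abs_iff hq hp2 _ _).mp e1) ((abs_le_abs_iff hq hp2 _ _).mp e2)
  set μ := y₀ - v₀ with hμ
  have hshift0 : z₀ + vmul q p Tw y₀ = u₀ + vmul q p Tw μ := by
    rw [hu₀, hμ, vmul_sub]
    abel
  have hmk : (μ.1, μ.2) = μ := rfl
  have ha : ¬ ((q:ℤ) ∣ u₀.1) := by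
    intro h
    apply hza
    have hd : (q:ℤ) ∣ (vmul q p Tw v₀).1 := by
      have h1 : (q:ℤ) ∣ Tw.1 := Tv_fst_dvd (v+1)
      have : (vmul q p Tw v₀).1 = Tw.1 * v₀.1 - q * Tw.2 * v₀.2 := rfl
      rw [this]
      exact dvd_sub (h1.mul_right _) ⟨Tw.2 * v₀.2, by ring⟩
    have h2 : z₀.1 = u₀.1 - (vmul q p Tw v₀).1 := by
      rw [hu₀]; simp
    rw [h2]
    exact dvd_sub h hd
  have hmin1 : ∀ x : ℤ × ℤ, NF q p u₀ ≤ NF q p (u₀ + vmul q p Tw x) := by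
    intro x
    have h1 := hNFmin (v₀ + x)
    have h2 : z₀ + vmul q p Tw (v₀ + x) = u₀ + vmul q p Tw x := by
      rw [hu₀, vmul_add]; abel
    rwa [h2] at h1
  have hmin2 : ∀ x : ℤ × ℤ, NF q p (u₀ + vmul q p Tw (μ.1, μ.2)) ≤
      NF q p (u₀ + vmul q p Tw ((μ.1, μ.2) + x)) := by
    intro x
    rw [hmk]
    have h2 : u₀ + vmul q p Tw (μ + x) = z₀ + vmul q p Tw (y₀ + x) := by
      rw [hu₀, hμ, vmul_add, vmul_add, vmul_sub]; abel
    rw [h2, ← hshift0]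
    have h3 := h3'' (iota q p (z₀ + vmul q p Tw (y₀ + x)))
      (class_mem hq hp2 z₀ (y₀ + x) (v+2)).1 (class_mem hq hp2 z₀ (y₀ + x) (v+2)).2
    exact (abs_le_abs_iff hq hp2 _ _).mp h3
  have heq2 : NF q p u₀ = NF q p (u₀ + vmul q p Tw (μ.1, μ.2)) := by
    rw [hmk, ← hshift0]; exact heqNF
  obtain ⟨hc0, hd0⟩ := key hq hp v u₀ μ.1 μ.2 ha hmin1 hmin2 heq2
  have hμ0 : μ = 0 := by
    rw [← hmk, hc0, hd0]; rfl
  rw [hshift0, hμ0, vmul_zero, add_zero]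
end
end

section
/- Let q ≥ 3, p = 1, a = ⌈q/2⌉ and b = ⌈q²/(6q − 2)⌉. For odd q set E = 1, A = (1 − q)·τ + (a − 1)·q − 1, F = (q − a)·τ + q − a, B = (q − a)·τ + a − 1, G = −a·τ + a − 1; for even q set E = 1, A = (−a − b)·τ + (a − 1)·q + 1, F = (q − a − 1)·τ + q − b, B = a·τ − a·q + 1, G = −(a − 1)·τ + (a − 1)·q + 1. Then A·τ² + B = E·τ⁶ + F·τ³ + G, and each of A, B, E, F, G is a nonzero digit modulo τ³; in particular, the element A·τ² + B has a digit expansion of weight 2 while the right-hand side is a 3-NAF expansion of it of weight 3, so the 3-NAF is not a minimal digit expansion. -/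
noncomputable section

open Complex

/-! ### Auxiliary lemmas for `stmt15` -/

private lemma stmt15_qsub_nonneg {q : ℤ} (hq : 3 ≤ q) : (0:ℝ) ≤ (q:ℝ) - 1/4 := by
  have : (3:ℝ) ≤ (q:ℝ) := by exact_mod_cast hq
  linarith

private lemma stmt15_tauC_re (q : ℤ) : (tauC q 1).re = 1/2 := by simp [tauC]
private lemma stmt15_tauC_im (q : ℤ) : (tauC q 1).im = Real.sqrt ((q:ℝ) - 1/4) := by
  simp [tauC]

private lemma stmt15_tau_sq (q : ℤ) (hq : 3 ≤ q) : (tauC q 1)^2 = tauC q 1 - (q:ℂ) := by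
  have hs : ((Real.sqrt ((q:ℝ) - 1/4) : ℝ) : ℂ)^2 = (q:ℂ) - 1/4 := by
    rw [← Complex.ofReal_pow, Real.sq_sqrt (stmt15_qsub_nonneg hq)]
    push_cast; ring
  simp only [tauC]
  push_cast
  linear_combination ((Real.sqrt ((q:ℝ) - 1/4) : ℝ) : ℂ)^2 * Complex.I_sq - hs

private lemma stmt15_coords_re (q : ℤ) (x y : ℤ) :
    ((x:ℂ) + (y:ℂ) * tauC q 1).re = (x:ℝ) + (y:ℝ)*(1/2) := by
  simp [Complex.add_re, Complex.mul_re, stmt15_tauC_re, stmt15_tauC_im]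

private lemma stmt15_coords_im (q : ℤ) (x y : ℤ) :
    ((x:ℂ) + (y:ℂ) * tauC q 1).im = (y:ℝ) * Real.sqrt ((q:ℝ) - 1/4) := by
  simp [Complex.add_im, Complex.mul_im, stmt15_tauC_re, stmt15_tauC_im]

private lemma stmt15_normSq_coords (q : ℤ) (hq : 3 ≤ q) (x y : ℤ) :
    ‖(x:ℂ) + (y:ℂ) * tauC q 1‖^2 = ((x^2 + x*y + q*y^2 : ℤ) : ℝ) := by
  have hs : (Real.sqrt ((q:ℝ) - 1/4))^2 = (q:ℝ) - 1/4 := Real.sq_sqrt (stmt15_qsub_nonneg hq)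
  rw [Complex.sq_norm, Complex.normSq_apply, stmt15_coords_re, stmt15_coords_im]
  push_cast
  linear_combination ((y:ℝ))^2 * hs

private lemma stmt15_coords_inj (q : ℤ) (hq : 3 ≤ q) {x y u v : ℤ}
    (h : (x:ℂ) + (y:ℂ) * tauC q 1 = (u:ℂ) + (v:ℂ) * tauC q 1) : x = u ∧ y = v := by
  have hspos : 0 < Real.sqrt ((q:ℝ) - 1/4) := Real.sqrt_pos.2 (by
    have : (3:ℝ) ≤ (q:ℝ) := by exact_mod_cast hq
    linarith)
  have him := congrArg Complex.im h
  have hre := congrArg Complex.re h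
  rw [stmt15_coords_im, stmt15_coords_im] at him
  rw [stmt15_coords_re, stmt15_coords_re] at hre
  have hyv : (y:ℝ) = (v:ℝ) := mul_right_cancel₀ (ne_of_gt hspos) him
  have hy : y = v := by exact_mod_cast hyv
  refine ⟨?_, hy⟩
  have : (x:ℝ) = (u:ℝ) := by rw [hyv] at hre; linarith
  exact_mod_cast this

private lemma stmt15_aux_sq_le (c : ℤ) (hc : c ≠ 0) : 1 ≤ c^2 := by
  have h := Int.one_le_abs hc
  nlinarith [_root_.sq_abs c]

private lemma stmt15_aux_d0 (q c K : ℤ) (hq : 3 ≤ q) (hK1 : -(q^3) ≤ K) (hK2 : K ≤ q^3) :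
    0 ≤ q^3*c^2 - c*K := by
  rcases eq_or_ne c 0 with hc | hc
  · subst hc; simp
  · have hc2 : 1 ≤ c^2 := stmt15_aux_sq_le c hc
    have hq3 : (0:ℤ) < q^3 := by positivity
    have hKsq : K^2 ≤ (q^3)^2 := by
      nlinarith [mul_nonneg (by linarith : (0:ℤ) ≤ q^3 - K) (by linarith : (0:ℤ) ≤ q^3 + K)]
    nlinarith [sq_nonneg (q^3*c - K), mul_nonneg (by linarith : (0:ℤ) ≤ c^2 - 1)
      (by positivity : (0:ℤ) ≤ (q^3)^2)]

private lemma stmt15_aux_cs (S T P : ℤ) (hP : P^2 ≤ 4*S*T) (hST : 4*S ≤ T) (hT : 0 < T) :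
    P ≤ T := by
  nlinarith

private lemma stmt15_key_int (q x y c d : ℤ) (hq : 3 ≤ q)
    (h1 : 4*(x^2 + x*y + q*y^2) ≤ q^4)
    (hK1 : -(q^3) ≤ x*(1-3*q) + y*(q-2*q^2))
    (hK2 : x*(1-3*q) + y*(q-2*q^2) ≤ q^3) :
    x^2 + x*y + q*y^2 ≤
      (x - (-q*c + q*(q-1)*d))^2 + (x - (-q*c + q*(q-1)*d)) * (y - ((1-q)*c + (1-2*q)*d))
        + q * (y - ((1-q)*c + (1-2*q)*d))^2 := by
  rcases eq_or_ne d 0 with hd | hd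
  · subst hd
    have hexp : (x - (-q*c + q*(q-1)*0))^2
        + (x - (-q*c + q*(q-1)*0)) * (y - ((1-q)*c + (1-2*q)*0))
        + q * (y - ((1-q)*c + (1-2*q)*0))^2
        = (x^2 + x*y + q*y^2) + (q^3*c^2 - c*(x*(1-3*q) + y*(q-2*q^2))) := by
      ring
    rw [hexp]
    have := stmt15_aux_d0 q c (x*(1-3*q) + y*(q-2*q^2)) hq hK1 hK2
    linarith
  · have hd2 : 1 ≤ d^2 := stmt15_aux_sq_le d hd
    obtain ⟨N, hN⟩ : ∃ t : ℤ, x^2 + x*y + q*y^2 = t := ⟨_, rfl⟩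
    obtain ⟨n, hn⟩ : ∃ t : ℤ, c^2 + c*d + q*d^2 = t := ⟨_, rfl⟩
    obtain ⟨Bp, hBp⟩ : ∃ t : ℤ, 2*x*(-q*c + q*(q-1)*d) + x*((1-q)*c + (1-2*q)*d)
        + y*(-q*c + q*(q-1)*d) + 2*q*y*((1-q)*c + (1-2*q)*d) = t := ⟨_, rfl⟩
    have hexp : (x - (-q*c + q*(q-1)*d))^2
        + (x - (-q*c + q*(q-1)*d)) * (y - ((1-q)*c + (1-2*q)*d))
        + q * (y - ((1-q)*c + (1-2*q)*d))^2 = N + (q^3 * n - Bp) := by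
      rw [← hN, ← hn, ← hBp]; ring
    rw [hN, hexp]
    have hnq : q ≤ n := by
      have h4 : 4*q - 1 ≤ 4*n := by
        rw [← hn]
        nlinarith [sq_nonneg (2*c + d),
          mul_nonneg (by linarith : (0:ℤ) ≤ 4*q - 1) (by linarith : (0:ℤ) ≤ d^2 - 1)]
      omega
    have hq3 : (0:ℤ) < q^3 := by positivity
    have hstep : q^3 * q ≤ q^3 * n := mul_le_mul_of_nonneg_left hnq (le_of_lt hq3)
    have hq34 : q^3 * q = q^4 := by ring
    have hzeta_big : 4*N ≤ q^3 * n := by rw [← hN]; linarith [h1, hstep, hq34]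
    have hzeta_pos : 0 < q^3 * n := by
      have h0 : (0:ℤ) < q^3 * q := by positivity
      linarith
    have hcs : Bp^2 ≤ 4 * N * (q^3 * n) := by
      have hid : 4 * N * (q^3 * n) - Bp^2
          = (4*q - 1) * (x*((1-q)*c + (1-2*q)*d) - y*(-q*c + q*(q-1)*d))^2 := by
        rw [← hN, ← hn, ← hBp]; ring
      have hnn : (0:ℤ) ≤ (4*q - 1) * (x*((1-q)*c + (1-2*q)*d) - y*(-q*c + q*(q-1)*d))^2 :=
        mul_nonneg (by linarith : (0:ℤ) ≤ 4*q - 1) (sq_nonneg _)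
      linarith
    have hBle : Bp ≤ q^3 * n := stmt15_aux_cs N (q^3*n) Bp hcs hzeta_big hzeta_pos
    linarith

private lemma stmt15_isDigit_of (q : ℤ) (hq : 3 ≤ q) (x y : ℤ) (hx : ¬ (q ∣ x))
    (h1 : 4*(x^2 + x*y + q*y^2) ≤ q^4)
    (hK1 : -(q^3) ≤ x*(1-3*q) + y*(q-2*q^2))
    (hK2 : x*(1-3*q) + y*(q-2*q^2) ≤ q^3) :
    IsNonzeroDigit q 1 3 ((x:ℂ) + (y:ℂ) * tauC q 1) := by
  have hτ2 := stmt15_tau_sq q hq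
  refine ⟨⟨x, y, rfl⟩, ?_, ?_⟩
  · rintro ⟨u, ⟨c, d, rfl⟩, heq⟩
    have hco : (x:ℂ) + (y:ℂ) * tauC q 1 = ((-(q*d) : ℤ):ℂ) + (((c+d) : ℤ):ℂ) * tauC q 1 := by
      push_cast
      linear_combination heq + (d:ℂ) * hτ2
    obtain ⟨hx', -⟩ := stmt15_coords_inj q hq hco
    exact hx ⟨-d, by rw [hx']; ring⟩
  · rintro z ⟨c, d, rfl⟩
    have hζ : (tauC q 1)^3 * ((c:ℂ) + (d:ℂ) * tauC q 1)
        = ((-q*c + q*(q-1)*d : ℤ):ℂ) + (((1-q)*c + (1-2*q)*d : ℤ):ℂ) * tauC q 1 := by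
      push_cast
      linear_combination (((c:ℂ) + (d:ℂ) * tauC q 1) * (tauC q 1 + 1) + (d:ℂ)*(1-(q:ℂ))) * hτ2
    rw [hζ]
    have hsub : ((x:ℂ) + (y:ℂ) * tauC q 1)
        - (((-q*c + q*(q-1)*d : ℤ):ℂ) + (((1-q)*c + (1-2*q)*d : ℤ):ℂ) * tauC q 1)
        = (((x - (-q*c + q*(q-1)*d) : ℤ)):ℂ)
          + (((y - ((1-q)*c + (1-2*q)*d) : ℤ)):ℂ) * tauC q 1 := by
      push_cast; ring
    rw [hsub]
    have e1 := stmt15_normSq_coords q hq x y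
    have e2 := stmt15_normSq_coords q hq (x - (-q*c + q*(q-1)*d)) (y - ((1-q)*c + (1-2*q)*d))
    have hint := stmt15_key_int q x y c d hq h1 hK1 hK2
    have h2 : ‖(x:ℂ) + (y:ℂ) * tauC q 1‖^2
        ≤ ‖(((x - (-q*c + q*(q-1)*d) : ℤ)):ℂ)
            + (((y - ((1-q)*c + (1-2*q)*d) : ℤ)):ℂ) * tauC q 1‖^2 := by
      rw [e1, e2]
      exact_mod_cast hint
    nlinarith [norm_nonneg ((x:ℂ) + (y:ℂ) * tauC q 1),
      norm_nonneg ((((x - (-q*c + q*(q-1)*d) : ℤ)):ℂ)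
        + (((y - ((1-q)*c + (1-2*q)*d) : ℤ)):ℂ) * tauC q 1)]

private lemma stmt15_not_dvd_of_mod (q x m r : ℤ) (hq : 3 ≤ q) (hx : x = m*q + r)
    (h1 : 1 ≤ r) (h2 : r < q) : ¬ q ∣ x := by
  rintro ⟨t, ht⟩
  have hdr : q ∣ r := ⟨t - m, by linear_combination ht - hx⟩
  have := Int.le_of_dvd (by linarith) hdr
  linarith

private lemma stmt15_isDigit_of' (q : ℤ) (hq : 3 ≤ q) (x y : ℤ) (z : ℂ)
    (hz : z = (x:ℂ) + (y:ℂ) * tauC q 1) (hx : ¬ (q ∣ x))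
    (h1 : 4*(x^2 + x*y + q*y^2) ≤ q^4)
    (hK1 : -(q^3) ≤ x*(1-3*q) + y*(q-2*q^2))
    (hK2 : x*(1-3*q) + y*(q-2*q^2) ≤ q^3) :
    IsNonzeroDigit q 1 3 z := hz ▸ stmt15_isDigit_of q hq x y hx h1 hK1 hK2

private lemma stmt15_digit_ne_zero {q : ℤ} {η : ℂ} (h : IsNonzeroDigit q 1 3 η) : η ≠ 0 := by
  rintro rfl
  exact h.2.1 ⟨0, ⟨0, 0, by simp⟩, by ring⟩

private lemma stmt15_expansions_of (q : ℤ) (A B E F G : ℂ)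
    (hA : IsNonzeroDigit q 1 3 A) (hB : IsNonzeroDigit q 1 3 B)
    (hE : IsNonzeroDigit q 1 3 E) (hF : IsNonzeroDigit q 1 3 F)
    (hG : IsNonzeroDigit q 1 3 G)
    (hid : A * (tauC q 1)^2 + B = E * (tauC q 1)^6 + F * (tauC q 1)^3 + G) :
    (∃ σ' : ℕ → ℂ, IsExpansion q 1 3 (A * (tauC q 1)^2 + B) σ' ∧ expWeight σ' = 2) ∧
    (∃ σ : ℕ → ℂ, IsExpansion q 1 3 (A * (tauC q 1)^2 + B) σ ∧ IsNAF 3 σ ∧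
      expWeight σ = 3) := by
  have hAne := stmt15_digit_ne_zero hA
  have hBne := stmt15_digit_ne_zero hB
  have hEne := stmt15_digit_ne_zero hE
  have hFne := stmt15_digit_ne_zero hF
  have hGne := stmt15_digit_ne_zero hG
  constructor
  · refine ⟨fun ℓ => if ℓ = 0 then B else if ℓ = 2 then A else 0, ⟨?_, ?_, ?_⟩, ?_⟩
    · apply Set.Finite.subset ((Set.finite_singleton 2).insert 0)
      intro ℓ hl
      simp only [Function.mem_support] at hl
      by_contra hmem
      simp only [Set.mem_insert_iff, Set.mem_singleton_iff, not_or] at hmem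
      simp [hmem.1, hmem.2] at hl
    · intro ℓ
      by_cases h0 : ℓ = 0
      · simp [h0, DigitSet]; right; exact hB
      · by_cases h2 : ℓ = 2
        · simp [h0, h2, DigitSet]; right; exact hA
        · simp [h0, h2, DigitSet]
    · have hsupp : Function.support (fun ℓ : ℕ =>
          (if ℓ = 0 then B else if ℓ = 2 then A else 0) * (tauC q 1)^ℓ)
          ⊆ ↑(Finset.range 3) := by
        intro ℓ hl
        simp only [Function.mem_support] at hl
        simp only [Finset.coe_range, Set.mem_Iio]
        by_contra hge
        push_neg at hge
        have h0 : ℓ ≠ 0 := by omega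
        have h2 : ℓ ≠ 2 := by omega
        simp [h0, h2] at hl
      rw [finsum_eq_finset_sum_of_support_subset _ hsupp]
      simp [Finset.sum_range_succ]
      ring
    · have hsupp : Function.support (fun ℓ : ℕ => if ℓ = 0 then B else if ℓ = 2 then A else 0)
          = {0, 2} := by
        ext ℓ
        simp only [Function.mem_support, Set.mem_insert_iff, Set.mem_singleton_iff]
        by_cases h0 : ℓ = 0
        · simp [h0, hBne]
        · by_cases h2 : ℓ = 2
          · simp [h0, h2, hAne]
          · simp [h0, h2]
      rw [expWeight, hsupp]
      rw [Set.ncard_pair (by norm_num : (0:ℕ) ≠ 2)]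
  · refine ⟨fun ℓ => if ℓ = 0 then G else if ℓ = 3 then F else if ℓ = 6 then E else 0,
      ⟨?_, ?_, ?_⟩, ?_, ?_⟩
    · apply Set.Finite.subset (((Set.finite_singleton 6).insert 3).insert 0)
      intro ℓ hl
      simp only [Function.mem_support] at hl
      by_contra hmem
      simp only [Set.mem_insert_iff, Set.mem_singleton_iff, not_or] at hmem
      simp [hmem.1, hmem.2.1, hmem.2.2] at hl
    · intro ℓ
      by_cases h0 : ℓ = 0
      · simp [h0, DigitSet]; right; exact hG
      · by_cases h3 : ℓ = 3
        · simp [h0, h3, DigitSet]; right; exact hF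
        · by_cases h6 : ℓ = 6
          · simp [h0, h3, h6, DigitSet]; right; exact hE
          · simp [h0, h3, h6, DigitSet]
    · have hsupp : Function.support (fun ℓ : ℕ =>
          (if ℓ = 0 then G else if ℓ = 3 then F else if ℓ = 6 then E else 0) * (tauC q 1)^ℓ)
          ⊆ ↑(Finset.range 7) := by
        intro ℓ hl
        simp only [Function.mem_support] at hl
        simp only [Finset.coe_range, Set.mem_Iio]
        by_contra hge
        push_neg at hge
        have h0 : ℓ ≠ 0 := by omega
        have h3 : ℓ ≠ 3 := by omega
        have h6 : ℓ ≠ 6 := by omega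
        simp [h0, h3, h6] at hl
      rw [finsum_eq_finset_sum_of_support_subset _ hsupp]
      simp [Finset.sum_range_succ]
      rw [hid]; ring
    · intro ℓ i j hi hj hne1 hne2
      have hmem : ∀ m : ℕ,
          (if m = 0 then G else if m = 3 then F else if m = 6 then E else 0) ≠ 0
          → m = 0 ∨ m = 3 ∨ m = 6 := by
        intro m hm
        by_contra hc
        push_neg at hc
        simp [hc.1, hc.2.1, hc.2.2] at hm
      have h1 := hmem _ hne1
      have h2 := hmem _ hne2
      omega
    · have hsupp : Function.support
          (fun ℓ : ℕ => if ℓ = 0 then G else if ℓ = 3 then F else if ℓ = 6 then E else 0)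
          = {0, 3, 6} := by
        ext ℓ
        simp only [Function.mem_support, Set.mem_insert_iff, Set.mem_singleton_iff]
        by_cases h0 : ℓ = 0
        · simp [h0, hGne]
        · by_cases h3 : ℓ = 3
          · simp [h0, h3, hFne]
          · by_cases h6 : ℓ = 6
            · simp [h0, h3, h6, hEne]
            · simp [h0, h3, h6]
      rw [expWeight, hsupp]
      rw [Set.ncard_insert_of_notMem (by norm_num) (Set.toFinite _),
        Set.ncard_pair (by norm_num : (3:ℕ) ≠ 6)]

private lemma stmt15_odd_branch (q aa : ℤ) (hq : 3 ≤ q) (ha : 2*aa = q + 1) :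
    (((1 - q : ℤ) : ℂ) * tauC q 1 + ((aa - 1) * q - 1 : ℤ)) * tauC q 1 ^ 2
        + (((q - aa : ℤ) : ℂ) * tauC q 1 + ((aa - 1 : ℤ) : ℂ))
      = (1:ℂ) * tauC q 1 ^ 6
        + (((q - aa : ℤ) : ℂ) * tauC q 1 + ((q - aa : ℤ) : ℂ)) * tauC q 1 ^ 3
        + (((-aa : ℤ) : ℂ) * tauC q 1 + ((aa - 1 : ℤ) : ℂ)) ∧
      IsNonzeroDigit q 1 3 (((1 - q : ℤ) : ℂ) * tauC q 1 + ((aa - 1) * q - 1 : ℤ)) ∧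
      IsNonzeroDigit q 1 3 (((q - aa : ℤ) : ℂ) * tauC q 1 + ((aa - 1 : ℤ) : ℂ)) ∧
      IsNonzeroDigit q 1 3 (1 : ℂ) ∧
      IsNonzeroDigit q 1 3 (((q - aa : ℤ) : ℂ) * tauC q 1 + ((q - aa : ℤ) : ℂ)) ∧
      IsNonzeroDigit q 1 3 (((-aa : ℤ) : ℂ) * tauC q 1 + ((aa - 1 : ℤ) : ℂ)) := by
  obtain ⟨k, rfl⟩ : ∃ k, q = 2*k+1 := ⟨aa-1, by omega⟩
  have haa : aa = k+1 := by omega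
  subst haa
  have hk : 1 ≤ k := by omega
  have hm : (0:ℤ) ≤ k - 1 := by omega
  have hτ2 := stmt15_tau_sq (2*k+1) hq
  push_cast at hτ2
  refine ⟨?_, ?_, ?_, ?_, ?_, ?_⟩
  · push_cast
    linear_combination (-(tauC (2*k+1) 1)^4 - (tauC (2*k+1) 1)^3
      + (k:ℂ)*(tauC (2*k+1) 1)^2 + tauC (2*k+1) 1) * hτ2
  · refine stmt15_isDigit_of' _ hq (2*k^2+k-1) (-(2*k)) _ (by push_cast; ring)
      (stmt15_not_dvd_of_mod _ _ (k-1) (2*k) hq (by ring) (by omega) (by omega)) ?_ ?_ ?_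
    · nlinarith [hm, mul_nonneg hm hm, mul_nonneg (mul_nonneg hm hm) hm,
        mul_nonneg (mul_nonneg hm hm) (mul_nonneg hm hm)]
    · nlinarith [hm, mul_nonneg hm hm, mul_nonneg (mul_nonneg hm hm) hm]
    · nlinarith [hm, mul_nonneg hm hm, mul_nonneg (mul_nonneg hm hm) hm]
  · refine stmt15_isDigit_of' _ hq k k _ (by push_cast; ring)
      (stmt15_not_dvd_of_mod _ _ 0 k hq (by ring) (by omega) (by omega)) ?_ ?_ ?_
    · nlinarith [hm, mul_nonneg hm hm, mul_nonneg (mul_nonneg hm hm) hm,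
        mul_nonneg (mul_nonneg hm hm) (mul_nonneg hm hm)]
    · nlinarith [hm, mul_nonneg hm hm, mul_nonneg (mul_nonneg hm hm) hm]
    · nlinarith [hm, mul_nonneg hm hm, mul_nonneg (mul_nonneg hm hm) hm]
  · refine stmt15_isDigit_of' _ hq 1 0 _ (by push_cast; ring)
      (stmt15_not_dvd_of_mod _ _ 0 1 hq (by ring) (by omega) (by omega)) ?_ ?_ ?_
    · nlinarith [hm, mul_nonneg hm hm, mul_nonneg (mul_nonneg hm hm) hm,
        mul_nonneg (mul_nonneg hm hm) (mul_nonneg hm hm)]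
    · nlinarith [hm, mul_nonneg hm hm, mul_nonneg (mul_nonneg hm hm) hm]
    · nlinarith [hm, mul_nonneg hm hm, mul_nonneg (mul_nonneg hm hm) hm]
  · refine stmt15_isDigit_of' _ hq k k _ (by push_cast; ring)
      (stmt15_not_dvd_of_mod _ _ 0 k hq (by ring) (by omega) (by omega)) ?_ ?_ ?_
    · nlinarith [hm, mul_nonneg hm hm, mul_nonneg (mul_nonneg hm hm) hm,
        mul_nonneg (mul_nonneg hm hm) (mul_nonneg hm hm)]
    · nlinarith [hm, mul_nonneg hm hm, mul_nonneg (mul_nonneg hm hm) hm]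
    · nlinarith [hm, mul_nonneg hm hm, mul_nonneg (mul_nonneg hm hm) hm]
  · refine stmt15_isDigit_of' _ hq k (-(k+1)) _ (by push_cast; ring)
      (stmt15_not_dvd_of_mod _ _ 0 k hq (by ring) (by omega) (by omega)) ?_ ?_ ?_
    · nlinarith [hm, mul_nonneg hm hm, mul_nonneg (mul_nonneg hm hm) hm,
        mul_nonneg (mul_nonneg hm hm) (mul_nonneg hm hm)]
    · nlinarith [hm, mul_nonneg hm hm, mul_nonneg (mul_nonneg hm hm) hm]
    · nlinarith [hm, mul_nonneg hm hm, mul_nonneg (mul_nonneg hm hm) hm]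

private lemma stmt15_even_branch (q aa bb : ℤ) (hq : 3 ≤ q) (ha : 2*aa = q)
    (hb1 : q^2 ≤ bb*(6*q-2)) (hb2 : bb*(6*q-2) ≤ q^2 + 6*q - 3) :
    ((((-aa - bb : ℤ) : ℂ)) * tauC q 1 + ((aa - 1) * q + 1 : ℤ)) * tauC q 1 ^ 2
        + (((aa : ℤ) : ℂ) * tauC q 1 + ((-(aa * q) + 1 : ℤ) : ℂ))
      = (1:ℂ) * tauC q 1 ^ 6
        + (((q - aa - 1 : ℤ) : ℂ) * tauC q 1 + ((q - bb : ℤ) : ℂ)) * tauC q 1 ^ 3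
        + (((-(aa - 1) : ℤ) : ℂ) * tauC q 1 + ((aa - 1) * q + 1 : ℤ)) ∧
      IsNonzeroDigit q 1 3 (((-aa - bb : ℤ) : ℂ) * tauC q 1 + ((aa - 1) * q + 1 : ℤ)) ∧
      IsNonzeroDigit q 1 3 (((aa : ℤ) : ℂ) * tauC q 1 + ((-(aa * q) + 1 : ℤ) : ℂ)) ∧
      IsNonzeroDigit q 1 3 (1 : ℂ) ∧
      IsNonzeroDigit q 1 3 (((q - aa - 1 : ℤ) : ℂ) * tauC q 1 + ((q - bb : ℤ) : ℂ)) ∧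
      IsNonzeroDigit q 1 3 (((-(aa - 1) : ℤ) : ℂ) * tauC q 1 + ((aa - 1) * q + 1 : ℤ)) := by
  have hq2 : q = 2*aa := by omega
  subst hq2
  have ha2 : 2 ≤ aa := by omega
  have h12 : (0:ℤ) < 12*aa - 2 := by omega
  have hu : (0:ℤ) ≤ 6*bb - 2*aa - 1 := by nlinarith [hb1, h12, ha2]
  have hv' : 6*bb ≤ 2*aa + 7 := by nlinarith [hb2, h12, ha2]
  have hv : (0:ℤ) ≤ 2*aa + 6 - 6*bb := by omega
  have hm : (0:ℤ) ≤ aa - 2 := by omega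
  have hτ2 := stmt15_tau_sq (2*aa) hq
  push_cast at hτ2
  refine ⟨?_, ?_, ?_, ?_, ?_, ?_⟩
  · push_cast
    linear_combination (-(tauC (2*aa) 1)^4 - (tauC (2*aa) 1)^3
      + (aa:ℂ)*(tauC (2*aa) 1)^2 - 2*(aa:ℂ) + 1) * hτ2
  · refine stmt15_isDigit_of' _ hq (2*aa^2 - 2*aa + 1) (-aa - bb) _ (by push_cast; ring)
      (stmt15_not_dvd_of_mod _ _ (aa-1) 1 hq (by ring) (by omega) (by omega)) ?_ ?_ ?_
    · nlinarith [hm, hv, mul_nonneg hm hv, mul_nonneg hm hm,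
        mul_nonneg (mul_nonneg hm hm) hv, mul_nonneg (mul_nonneg hm hm) hm,
        mul_nonneg hu hv, mul_nonneg hm (mul_nonneg hu hv)]
    · nlinarith [hm, hu, mul_nonneg hm hu, mul_nonneg hm hm,
        mul_nonneg (mul_nonneg hm hm) hu, mul_nonneg (mul_nonneg hm hm) hm]
    · nlinarith [hm, hv, mul_nonneg hm hv, mul_nonneg hm hm,
        mul_nonneg (mul_nonneg hm hm) hv, mul_nonneg (mul_nonneg hm hm) hm]
  · refine stmt15_isDigit_of' _ hq (-(2*aa^2) + 1) aa _ (by push_cast; ring)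
      (stmt15_not_dvd_of_mod _ _ (-aa) 1 hq (by ring) (by omega) (by omega)) ?_ ?_ ?_
    · nlinarith [hm, mul_nonneg hm hm]
    · nlinarith [hm, mul_nonneg hm hm, mul_nonneg (mul_nonneg hm hm) hm]
    · nlinarith [hm, mul_nonneg hm hm, mul_nonneg (mul_nonneg hm hm) hm]
  · refine stmt15_isDigit_of' _ hq 1 0 _ (by push_cast; ring)
      (stmt15_not_dvd_of_mod _ _ 0 1 hq (by ring) (by omega) (by omega)) ?_ ?_ ?_
    · nlinarith [hm, mul_nonneg hm hm, mul_nonneg (mul_nonneg hm hm) hm,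
        mul_nonneg (mul_nonneg hm hm) (mul_nonneg hm hm)]
    · nlinarith [hm, mul_nonneg hm hm, mul_nonneg (mul_nonneg hm hm) hm]
    · nlinarith [hm, mul_nonneg hm hm, mul_nonneg (mul_nonneg hm hm) hm]
  · refine stmt15_isDigit_of' _ hq (2*aa - bb) (aa - 1) _ (by push_cast; ring)
      (stmt15_not_dvd_of_mod _ _ 0 (2*aa - bb) hq (by ring) (by omega) (by omega)) ?_ ?_ ?_
    · nlinarith [hm, hu, mul_nonneg hm hu, mul_nonneg hm hm,
        mul_nonneg (mul_nonneg hm hm) hm,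
        mul_nonneg (mul_nonneg hm hm) (mul_nonneg hm hm), mul_nonneg hu hv]
    · nlinarith [hu, hm, mul_nonneg hm hu]
    · nlinarith [hv, hm, mul_nonneg hm hv, mul_nonneg hm hm,
        mul_nonneg (mul_nonneg hm hm) hm]
  · refine stmt15_isDigit_of' _ hq (2*aa^2 - 2*aa + 1) (-(aa - 1)) _ (by push_cast; ring)
      (stmt15_not_dvd_of_mod _ _ (aa-1) 1 hq (by ring) (by omega) (by omega)) ?_ ?_ ?_
    · nlinarith [hm, mul_nonneg hm hm, mul_nonneg (mul_nonneg hm hm) hm]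
    · nlinarith [hm, mul_nonneg hm hm, mul_nonneg (mul_nonneg hm hm) hm]
    · nlinarith [hm, mul_nonneg hm hm, mul_nonneg (mul_nonneg hm hm) hm]


/-- explicit counterexample to minimality of the 3-NAF for q ≥ 3,
p = 1 (odd and even q). -/
theorem stmt15 (q p : ℤ) (hq : 3 ≤ q) (hp : p = 1) :
    let a : ℤ := ⌈(q : ℚ) / 2⌉
    let b : ℤ := ⌈(q : ℚ) ^ 2 / (6 * (q : ℚ) - 2)⌉
    let τ : ℂ := tauC q p
    (Odd q →
      let E : ℂ := 1
      let A : ℂ := ((1 - q : ℤ) : ℂ) * τ + ((a - 1) * q - 1 : ℤ)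
      let F : ℂ := ((q - a : ℤ) : ℂ) * τ + ((q - a : ℤ) : ℂ)
      let B : ℂ := ((q - a : ℤ) : ℂ) * τ + ((a - 1 : ℤ) : ℂ)
      let G : ℂ := ((-a : ℤ) : ℂ) * τ + ((a - 1 : ℤ) : ℂ)
      A * τ ^ 2 + B = E * τ ^ 6 + F * τ ^ 3 + G ∧
      IsNonzeroDigit q p 3 A ∧ IsNonzeroDigit q p 3 B ∧ IsNonzeroDigit q p 3 E ∧
      IsNonzeroDigit q p 3 F ∧ IsNonzeroDigit q p 3 G ∧
      (∃ σ' : ℕ → ℂ, IsExpansion q p 3 (A * τ ^ 2 + B) σ' ∧ expWeight σ' = 2) ∧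
      (∃ σ : ℕ → ℂ, IsExpansion q p 3 (A * τ ^ 2 + B) σ ∧ IsNAF 3 σ ∧
        expWeight σ = 3)) ∧
    (Even q →
      let E : ℂ := 1
      let A : ℂ := ((-a - b : ℤ) : ℂ) * τ + ((a - 1) * q + 1 : ℤ)
      let F : ℂ := ((q - a - 1 : ℤ) : ℂ) * τ + ((q - b : ℤ) : ℂ)
      let B : ℂ := ((a : ℤ) : ℂ) * τ + ((-(a * q) + 1 : ℤ) : ℂ)
      let G : ℂ := ((-(a - 1) : ℤ) : ℂ) * τ + ((a - 1) * q + 1 : ℤ)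
      A * τ ^ 2 + B = E * τ ^ 6 + F * τ ^ 3 + G ∧
      IsNonzeroDigit q p 3 A ∧ IsNonzeroDigit q p 3 B ∧ IsNonzeroDigit q p 3 E ∧
      IsNonzeroDigit q p 3 F ∧ IsNonzeroDigit q p 3 G ∧
      (∃ σ' : ℕ → ℂ, IsExpansion q p 3 (A * τ ^ 2 + B) σ' ∧ expWeight σ' = 2) ∧
      (∃ σ : ℕ → ℂ, IsExpansion q p 3 (A * τ ^ 2 + B) σ ∧ IsNAF 3 σ ∧
        expWeight σ = 3)) := by
  subst hp
  intro a b τ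
  have hadef : a = ⌈(q : ℚ) / 2⌉ := rfl
  have hbdef : b = ⌈(q : ℚ) ^ 2 / (6 * (q : ℚ) - 2)⌉ := rfl
  have hqQ : (3:ℚ) ≤ (q:ℚ) := by exact_mod_cast hq
  constructor
  · intro hodd
    have ha : 2 * a = q + 1 := by
      obtain ⟨k, hk⟩ := hodd
      have hq' : q = 2*k+1 := by omega
      have hcast : (q:ℚ) = 2*(k:ℚ)+1 := by exact_mod_cast hq'
      have hceil : (⌈(q:ℚ)/2⌉ : ℤ) = k+1 := by
        rw [Int.ceil_eq_iff]
        constructor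
        · rw [hcast]; push_cast; linarith
        · rw [hcast]; push_cast; linarith
      rw [hadef, hceil]
      omega
    intro E A F B G
    obtain ⟨hid, hA, hB, hE, hF, hG⟩ := stmt15_odd_branch q a hq ha
    have hexp := stmt15_expansions_of q _ _ _ _ _ hA hB hE hF hG hid
    exact ⟨hid, hA, hB, hE, hF, hG, hexp.1, hexp.2⟩
  · intro heven
    have ha : 2 * a = q := by
      obtain ⟨k, hk⟩ := heven
      have hq' : q = 2*k := by omega
      have hcast : (q:ℚ) = 2*(k:ℚ) := by exact_mod_cast hq'
      have hceil : (⌈(q:ℚ)/2⌉ : ℤ) = k := by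
        rw [Int.ceil_eq_iff]
        constructor
        · rw [hcast]; push_cast; linarith
        · rw [hcast]; push_cast; linarith
      rw [hadef, hceil]
      omega
    have hpos : (0:ℚ) < 6*(q:ℚ) - 2 := by linarith
    have hb1 : q^2 ≤ b*(6*q-2) := by
      have h1 := Int.le_ceil ((q:ℚ)^2/(6*(q:ℚ)-2))
      rw [← hbdef] at h1
      have h1' : (q:ℚ)^2 ≤ (b:ℚ)*(6*(q:ℚ)-2) := by
        rw [div_le_iff₀ hpos] at h1
        exact h1
      exact_mod_cast h1'
    have hb2 : b*(6*q-2) ≤ q^2 + 6*q - 3 := by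
      have h2 := Int.ceil_lt_add_one ((q:ℚ)^2/(6*(q:ℚ)-2))
      rw [← hbdef] at h2
      have h2' : ((b:ℚ) - 1)*(6*(q:ℚ)-2) < (q:ℚ)^2 := by
        rw [← lt_div_iff₀ hpos]
        linarith
      have h2'' : (b - 1)*(6*q-2) < q^2 := by exact_mod_cast h2'
      nlinarith [h2'']
    intro E A F B G
    obtain ⟨hid, hA, hB, hE, hF, hG⟩ := stmt15_even_branch q a b hq ha hb1 hb2
    have hexp := stmt15_expansions_of q _ _ _ _ _ hA hB hE hF hG hid
    exact ⟨hid, hA, hB, hE, hF, hG, hexp.1, hexp.2⟩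
end
end

section
/- Let P ⊆ ℂ be the convex hull of the four points 1, τ − p, −1, −τ + p, and let s = √((q − 1/4)/(q + 2)). Then the closed disc of radius s centered at 0 is contained in P, and s is the largest such radius: every real r ≥ 0 such that the closed disc of radius r centered at 0 is contained in P satisfies r ≤ s. -/
noncomputable section

open Complex

set_option maxHeartbeats 1000000 in
/-- the disc of radius s = √((q − 1/4)/(q + 2)) fits exactly into
the parallelogram with vertices 1, τ − p, −1, −τ + p. -/
theorem stmt16 (q p : ℤ) (hq : 2 ≤ q) (hp : p = -1 ∨ p = 1) :
    Metric.closedBall (0 : ℂ) (sHeight q) ⊆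
      convexHull ℝ ({1, tauC q p - (p : ℂ), -1, -(tauC q p) + (p : ℂ)} : Set ℂ) ∧
    ∀ r : ℝ, 0 ≤ r →
      Metric.closedBall (0 : ℂ) r ⊆
        convexHull ℝ ({1, tauC q p - (p : ℂ), -1, -(tauC q p) + (p : ℂ)} : Set ℂ) →
      r ≤ sHeight q := by
  have hqR : (2:ℝ) ≤ (q:ℝ) := by exact_mod_cast hq
  set h : ℝ := Real.sqrt ((q:ℝ) - 1/4) with hh_def
  have hh2 : h ^ 2 = (q:ℝ) - 1/4 := by
    rw [hh_def, Real.sq_sqrt]; linarith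
  have hhpos : 0 < h := by
    rw [hh_def]; apply Real.sqrt_pos.2; linarith
  have hq2pos : (0:ℝ) < (q:ℝ) + 2 := by linarith
  have hs2 : (sHeight q) ^ 2 = ((q:ℝ) - 1/4) / ((q:ℝ) + 2) := by
    rw [sHeight, Real.sq_sqrt]
    apply div_nonneg <;> linarith
  have hs0 : 0 ≤ sHeight q := Real.sqrt_nonneg _
  have hp1 : |(p:ℝ)| = 1 := by rcases hp with h | h <;> subst h <;> norm_num
  have hp2 : (p:ℝ)^2 = 1 := by rcases hp with h | h <;> subst h <;> norm_num
  have htre : (tauC q p).re = (p:ℝ)/2 := by simp [tauC]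
  have htim : (tauC q p).im = h := by simp [tauC, hh_def]
  set S : Set ℂ := ({1, tauC q p - (p : ℂ), -1, -(tauC q p) + (p : ℂ)} : Set ℂ) with hS
  set B : ℂ := tauC q p - (p : ℂ) with hB
  have hBre : B.re = -(p:ℝ)/2 := by
    simp [hB, htre]; ring
  have hBim : B.im = h := by simp [hB, htim]
  have hBS : B ∈ S := by simp [hS]
  have hnBS : -B ∈ S := by
    have : -B = -(tauC q p) + (p:ℂ) := by rw [hB]; ring
    rw [this]; simp [hS]
  have h1S : (1:ℂ) ∈ S := by simp [hS]
  have hn1S : (-1:ℂ) ∈ S := by simp [hS]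
  have hconv := convex_convexHull ℝ S
  have hsub := subset_convexHull ℝ S
  have h0mem : (0:ℂ) ∈ convexHull ℝ S := by
    have := hconv (hsub h1S) (hsub hn1S) (by norm_num : (0:ℝ) ≤ 1/2)
      (by norm_num : (0:ℝ) ≤ 1/2) (by norm_num : (1:ℝ)/2 + 1/2 = 1)
    simpa using this
  constructor
  · intro z hz
    have habs : ‖z‖ ≤ sHeight q := by
      rw [Metric.mem_closedBall, Complex.dist_eq, sub_zero] at hz; exact hz
    set x := z.re with hx
    set y := z.im with hy
    have hxy : x^2 + y^2 ≤ ((q:ℝ) - 1/4) / ((q:ℝ) + 2) := by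
      have h1 : ‖z‖ ^ 2 ≤ sHeight q ^ 2 := by
        apply pow_le_pow_left₀ (norm_nonneg z) habs
      rw [Complex.sq_norm, Complex.normSq_apply, hs2] at h1
      nlinarith [h1]
    set α : ℝ := x + (p:ℝ) * y / (2 * h) with hα
    set β : ℝ := y / h with hβ
    -- key inequality
    have key : h * |x| + 3/2 * |y| ≤ h := by
      have hA0 : 0 ≤ h * |x| + 3/2 * |y| := by positivity
      have hA2 : (h * |x| + 3/2 * |y|)^2 ≤ h^2 := by
        have hc : (h * |x| + 3/2 * |y|)^2 ≤ (h^2 + 9/4) * (x^2 + y^2) := by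
          nlinarith [sq_nonneg (3/2 * |x| - h * |y|), _root_.sq_abs x, _root_.sq_abs y]
        have : (h^2 + 9/4) * (x^2 + y^2) ≤ h^2 := by
          rw [hh2]
          calc ((q:ℝ) - 1/4 + 9/4) * (x^2 + y^2) ≤ ((q:ℝ) + 2) * (((q:ℝ) - 1/4) / ((q:ℝ) + 2)) := by
                have : ((q:ℝ) - 1/4 + 9/4) = (q:ℝ) + 2 := by ring
                rw [this]
                exact mul_le_mul_of_nonneg_left hxy (by linarith)
            _ = (q:ℝ) - 1/4 := by field_simp
        linarith
      have := Real.sqrt_le_sqrt hA2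
      rwa [Real.sqrt_sq hA0, Real.sqrt_sq hhpos.le] at this
    have habsum : |α| + |β| ≤ 1 := by
      have h1 : |α| ≤ |x| + |y| / (2 * h) := by
        calc |α| ≤ |x| + |(p:ℝ) * y / (2 * h)| := abs_add_le _ _
          _ = |x| + |y| / (2 * h) := by
              rw [abs_div, abs_mul, hp1, one_mul, abs_of_pos (by linarith : (0:ℝ) < 2*h)]
      have h2 : |β| = |y| / h := by
        rw [hβ, abs_div, abs_of_pos hhpos]
      have : h * (|x| + |y| / (2 * h)) + h * (|y| / h) ≤ h := by
        have e1 : h * (|x| + |y| / (2 * h)) = h * |x| + |y| / 2 := by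
          field_simp
        have e2 : h * (|y| / h) = |y| := by field_simp
        rw [e1, e2]; linarith [key]
      nlinarith [h1, h2, hhpos, abs_nonneg β]
    -- z = α • 1 + β • B
    have hzeq : z = α • (1:ℂ) + β • B := by
      apply Complex.ext
      · simp only [Complex.add_re, Complex.smul_re, Complex.one_re, hBre, mul_one]
        rw [hα, hβ]
        field_simp
        ring
        rw [mul_inv_cancel_right₀ hhpos.ne']
      · simp only [Complex.add_im, Complex.smul_im, Complex.one_im, hBim, mul_zero, zero_add]
        rw [hβ]
        field_simp
        rw [smul_eq_mul, smul_eq_mul, mul_zero, zero_add, div_mul_cancel₀ _ hhpos.ne']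
    set u : ℂ := if 0 ≤ α then 1 else -1 with hu
    set v : ℂ := if 0 ≤ β then B else -B with hv
    have hαu : |α| • u = α • (1:ℂ) := by
      rw [hu]; split_ifs with hc
      · rw [_root_.abs_of_nonneg hc]
      · rw [abs_of_neg (lt_of_not_ge hc)]; simp
    have hβv : |β| • v = β • B := by
      rw [hv]; split_ifs with hc
      · rw [_root_.abs_of_nonneg hc]
      · rw [abs_of_neg (lt_of_not_ge hc)]; simp
    have humem : u ∈ convexHull ℝ S := by
      rw [hu]; split_ifs <;> [exact hsub h1S; exact hsub hn1S]
    have hvmem : v ∈ convexHull ℝ S := by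
      rw [hv]; split_ifs <;> [exact hsub hBS; exact hsub hnBS]
    by_cases hT0 : |α| + |β| = 0
    · have hα0 : α = 0 := by
        have := abs_nonneg α; have := abs_nonneg β
        have : |α| = 0 := by linarith
        exact abs_eq_zero.1 this
      have hβ0 : β = 0 := by
        have := abs_nonneg α; have := abs_nonneg β
        have : |β| = 0 := by linarith
        exact abs_eq_zero.1 this
      have : z = 0 := by rw [hzeq, hα0, hβ0]; simp
      rw [this]; exact h0mem
    · set T : ℝ := |α| + |β| with hTdef
      have hTpos : 0 < T := lt_of_le_of_ne (by positivity) (Ne.symm hT0)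
      have hinner : (|α| / T) • u + (|β| / T) • v ∈ convexHull ℝ S := by
        apply hconv humem hvmem (by positivity) (by positivity)
        field_simp
        exact hTdef.symm
      have hfin := hconv.smul_mem_of_zero_mem h0mem hinner
        (Set.mem_Icc.2 ⟨le_of_lt hTpos, habsum⟩)
      have : T • ((|α| / T) • u + (|β| / T) • v) = z := by
        rw [smul_add, smul_smul, smul_smul, mul_div_cancel₀ _ (ne_of_gt hTpos),
          mul_div_cancel₀ _ (ne_of_gt hTpos), hαu, hβv, ← hzeq]
      rwa [this] at hfin
  · intro r hr hrsub
    set c : ℝ := 3 * (p:ℝ) / 2 with hc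
    -- hull is contained in {z | h * z.re + c * z.im ≤ h}
    have hlin : IsLinearMap ℝ (fun z : ℂ => h * z.re + c * z.im) := by
      constructor
      · intro a b; simp [Complex.add_re, Complex.add_im]; ring
      · intro m a; simp [Complex.smul_re, Complex.smul_im]; ring
    have hhalf : Convex ℝ {z : ℂ | h * z.re + c * z.im ≤ h} :=
      convex_halfSpace_le hlin h
    have hSsub : S ⊆ {z : ℂ | h * z.re + c * z.im ≤ h} := by
      intro w hw
      rcases hp with hp' | hp' <;> subst hp' <;>
        simp [hS] at hw <;>
        rcases hw with hw | hw | hw | hw <;> subst hw <;>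
        simp [Set.mem_setOf_eq, Complex.sub_re, Complex.sub_im, Complex.neg_re,
          Complex.neg_im, Complex.add_re, Complex.add_im, htre, htim, hc] <;>
        push_cast <;> nlinarith [hhpos]
    have hhullsub : convexHull ℝ S ⊆ {z : ℂ | h * z.re + c * z.im ≤ h} :=
      convexHull_min hSsub hhalf
    -- test point
    set sq2 : ℝ := Real.sqrt ((q:ℝ) + 2) with hsq2
    have hsq2pos : 0 < sq2 := Real.sqrt_pos.2 hq2pos
    have hsq22 : sq2 ^ 2 = (q:ℝ) + 2 := Real.sq_sqrt (le_of_lt hq2pos)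
    set k : ℝ := r / sq2 with hk
    set zstar : ℂ := k • ((h:ℂ) + (c:ℝ) * Complex.I) with hzs
    have hc2 : h^2 + c^2 = (q:ℝ) + 2 := by
      rw [hh2, hc]; nlinarith [hp2]
    have hzsre : zstar.re = k * h := by
      rw [hzs]; simp [Complex.smul_re]
    have hzsim : zstar.im = k * c := by
      rw [hzs]; simp [Complex.smul_im]
    have hzsball : zstar ∈ Metric.closedBall (0:ℂ) r := by
      rw [Metric.mem_closedBall, Complex.dist_eq, sub_zero]
      have hns : zstar.re * zstar.re + zstar.im * zstar.im = r^2 := by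
        rw [hzsre, hzsim]
        have e1 : k * h * (k * h) + k * c * (k * c) = k^2 * (h^2 + c^2) := by ring
        rw [e1, hc2, hk, div_pow, hsq22]
        field_simp
      rw [Complex.norm_def, Complex.normSq_apply, hns, Real.sqrt_sq hr]
    have hfz : h * zstar.re + c * zstar.im = r * sq2 := by
      rw [hzsre, hzsim]
      have e1 : h * (k * h) + c * (k * c) = k * (h^2 + c^2) := by ring
      rw [e1, hc2, hk, ← hsq22]
      field_simp
    have := hhullsub (hrsub hzsball)
    rw [Set.mem_setOf_eq, hfz] at this
    -- r * sq2 ≤ h → r ≤ sHeight q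
    have hsh : sHeight q * sq2 = h := by
      rw [sHeight, hsq2, hh_def,
        ← Real.sqrt_mul (div_nonneg (by linarith) (by linarith))]
      congr 1
      field_simp
    nlinarith [this, hsh, hsq2pos, hr, hs0]
end
end

section
/- Let w ≥ 2 be an integer. If w ≥ 5 or q ≥ 5, then there exists a nonzero digit a modulo τ^w such that a + τ^{w−1} is also a nonzero digit modulo τ^w. If either (w ≥ 4 and q ≥ 11) or w ≥ 8, then there exists a nonzero digit b modulo τ^w such that b + (conj τ)·τ^{w−1} is also a nonzero digit modulo τ^w, where conj τ denotes the complex conjugate of τ. -/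
noncomputable section

open Complex

namespace S18

lemma sqrt_le_of_sq (x y : ℝ) (hy : 0 ≤ y) (h : x ≤ y^2) : Real.sqrt x ≤ y := by
  rw [show y = Real.sqrt (y^2) by rw [Real.sqrt_sq hy]]; exact Real.sqrt_le_sqrt h

variable {q p : ℤ}

lemma hq14 (hq : 2 ≤ q) : (0:ℝ) ≤ (q:ℝ) - 1/4 := by
  have : (2:ℝ) ≤ (q:ℝ) := by exact_mod_cast hq
  linarith

lemma yq_sq (hq : 2 ≤ q) :
    Real.sqrt ((q:ℝ) - 1/4) * Real.sqrt ((q:ℝ) - 1/4) = (q:ℝ) - 1/4 :=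
  Real.mul_self_sqrt (hq14 hq)

lemma hp2 (hp : p = -1 ∨ p = 1) : (p:ℝ) * (p:ℝ) = 1 := by
  rcases hp with h | h <;> subst h <;> norm_num

lemma tau_re : (tauC q p).re = (p:ℝ)/2 := by simp [tauC]

lemma tau_im : (tauC q p).im = Real.sqrt ((q:ℝ) - 1/4) := by simp [tauC]

lemma tau_sq (hq : 2 ≤ q) (hp : p = -1 ∨ p = 1) :
    tauC q p ^ 2 = (p:ℂ) * tauC q p - (q:ℂ) := by
  apply Complex.ext
  · simp [pow_two, Complex.mul_re, Complex.sub_re, tau_re, tau_im]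
    nlinarith [yq_sq hq, hp2 hp]
  · simp [pow_two, Complex.mul_im, Complex.sub_im, tau_re, tau_im]
    ring

lemma normSq_tau (hq : 2 ≤ q) (hp : p = -1 ∨ p = 1) :
    Complex.normSq (tauC q p) = (q:ℝ) := by
  rw [Complex.normSq_apply, tau_re, tau_im, yq_sq hq]
  have := hp2 hp
  nlinarith [this]

lemma mul_conj_tau (hq : 2 ≤ q) (hp : p = -1 ∨ p = 1) :
    tauC q p * (starRingEnd ℂ) (tauC q p) = (q:ℂ) := by
  rw [Complex.mul_conj, normSq_tau hq hp]
  norm_cast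

lemma normSq_coords (hq : 2 ≤ q) (hp : p = -1 ∨ p = 1) (m n : ℤ) :
    Complex.normSq ((m:ℂ) + (n:ℂ) * tauC q p)
      = (m:ℝ)^2 + (p:ℝ)*(m:ℝ)*(n:ℝ) + (q:ℝ)*(n:ℝ)^2 := by
  rw [Complex.normSq_apply]
  simp [Complex.add_re, Complex.add_im, Complex.mul_re, Complex.mul_im, tau_re, tau_im]
  have h1 := yq_sq hq
  have h2 := hp2 hp
  nlinarith [h1, h2]

lemma coords_inj (hq : 2 ≤ q) (A B C D : ℤ)
    (h : (A:ℂ) + (B:ℂ) * tauC q p = (C:ℂ) + (D:ℂ) * tauC q p) : A = C ∧ B = D := by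
  have hy : 0 < Real.sqrt ((q:ℝ) - 1/4) := by
    apply Real.sqrt_pos.mpr
    have : (2:ℝ) ≤ (q:ℝ) := by exact_mod_cast hq
    linarith
  have him : (B:ℝ) * Real.sqrt ((q:ℝ) - 1/4) = (D:ℝ) * Real.sqrt ((q:ℝ) - 1/4) := by
    have := congrArg Complex.im h
    simpa [Complex.add_im, Complex.mul_im, tau_re, tau_im] using this
  have hBD : (B:ℝ) = (D:ℝ) := mul_right_cancel₀ (ne_of_gt hy) him
  have hBD' : B = D := by exact_mod_cast hBD
  subst hBD'
  have hre := congrArg Complex.re h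
  simp [Complex.add_re, Complex.mul_re, tau_re, tau_im] at hre
  constructor
  · exact_mod_cast hre
  · rfl

def tXY (q p : ℤ) : ℕ → ℤ × ℤ
  | 0 => (1, 0)
  | (k+1) => (-q * (tXY q p k).2, (tXY q p k).1 + p * (tXY q p k).2)

lemma tau_pow (hq : 2 ≤ q) (hp : p = -1 ∨ p = 1) (k : ℕ) :
    tauC q p ^ k = ((tXY q p k).1 : ℂ) + ((tXY q p k).2 : ℂ) * tauC q p := by
  induction k with
  | zero => simp [tXY]
  | succ k ih =>
    have hsq := tau_sq hq hp
    rw [pow_succ, ih, tXY]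
    push_cast
    have : ((tXY q p k).1 + (tXY q p k).2 * tauC q p) * tauC q p
        = ((tXY q p k).1 : ℂ) * tauC q p + (tXY q p k).2 * tauC q p ^ 2 := by ring
    rw [this, hsq]
    ring

lemma mem_Ztau (A B : ℤ) : (A:ℂ) + (B:ℂ) * tauC q p ∈ Ztau q p := ⟨A, B, rfl⟩

lemma not_tau_dvd (hq : 2 ≤ q) (hp : p = -1 ∨ p = 1) (A B : ℤ) (hA : ¬ q ∣ A) :
    ¬ tauPowDvd q p 1 ((A:ℂ) + (B:ℂ) * tauC q p) := by
  rintro ⟨u, ⟨m, n, rfl⟩, h⟩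
  rw [pow_one] at h
  have hsq := tau_sq hq hp
  have h2 : (A:ℂ) + (B:ℂ) * tauC q p = ((-(q*n) : ℤ):ℂ) + (((m + p*n) : ℤ):ℂ) * tauC q p := by
    rw [h]
    push_cast
    have : tauC q p * ((m:ℂ) + (n:ℂ) * tauC q p)
        = (m:ℂ) * tauC q p + (n:ℂ) * tauC q p ^ 2 := by ring
    rw [this, hsq]
    ring
  have := (coords_inj hq _ _ _ _ h2).1
  exact hA ⟨-n, by linarith [this]⟩

lemma re_sq_le_normSq (z : ℂ) : z.re^2 ≤ Complex.normSq z := by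
  rw [Complex.normSq_apply]
  nlinarith [sq_nonneg z.im]

lemma small_or_big (hp : p = -1 ∨ p = 1) (hq : 2 ≤ q) (m n : ℤ) :
    (m = 0 ∧ n = 0) ∨ (m = 1 ∧ n = 0) ∨ (m = -1 ∧ n = 0) ∨ (m = 0 ∧ n = 1) ∨
    (m = 0 ∧ n = -1) ∨ (m = -p ∧ n = 1) ∨ (m = p ∧ n = -1) ∨
    4 ≤ m^2 + p*m*n + q*n^2 := by
  have hpp : p * p = 1 := by rcases hp with h | h <;> subst h <;> ring
  by_cases hn2 : n ≤ -2 ∨ 2 ≤ n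
  · right; right; right; right; right; right; right
    have h1 : 4 ≤ n^2 := by rcases hn2 with h | h <;> nlinarith
    nlinarith [sq_nonneg (2*m + p*n)]
  · push_neg at hn2
    obtain ⟨hl, hr⟩ := hn2
    interval_cases n
    · -- n = -1
      by_cases hm0 : m = 0
      · right; right; right; right; left; exact ⟨hm0, rfl⟩
      · by_cases hmp : m = p
        · right; right; right; right; right; right; left; exact ⟨hmp, rfl⟩
        · right; right; right; right; right; right; right
          have hodd : 2*m - p ≤ -3 ∨ 3 ≤ 2*m - p := by
            rcases hp with h | h <;> subst h <;> omega
          have h9 : 9 ≤ (2*m - p)^2 := by rcases hodd with h | h <;> nlinarith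
          nlinarith
    · -- n = 0
      by_cases hm0 : m = 0
      · left; exact ⟨hm0, rfl⟩
      · by_cases hm1 : m = 1
        · right; left; exact ⟨hm1, rfl⟩
        · by_cases hm1' : m = -1
          · right; right; left; exact ⟨hm1', rfl⟩
          · right; right; right; right; right; right; right
            have : m ≤ -2 ∨ 2 ≤ m := by omega
            rcases this with h | h <;> nlinarith
    · -- n = 1
      by_cases hm0 : m = 0
      · right; right; right; left; exact ⟨hm0, rfl⟩
      · by_cases hmp : m = -p
        · right; right; right; right; right; left; exact ⟨hmp, rfl⟩
        · right; right; right; right; right; right; right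
          have hodd : 2*m + p ≤ -3 ∨ 3 ≤ 2*m + p := by
            rcases hp with h | h <;> subst h <;> omega
          have h9 : 9 ≤ (2*m + p)^2 := by rcases hodd with h | h <;> nlinarith
          nlinarith

set_option maxHeartbeats 1000000 in
lemma isDigit_of (hq : 2 ≤ q) (hp : p = -1 ∨ p = 1) (w : ℕ) (A B : ℤ)
    (hA : ¬ q ∣ A) (a : ℂ) (ha : a = (A:ℂ) + (B:ℂ) * tauC q p)
    (hn : Complex.normSq a ≤ (q:ℝ)^w)
    (h2 : |(a * (starRingEnd ℂ) (tauC q p ^ w)).re| ≤ (q:ℝ)^w/2)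
    (h3 : |(a * (starRingEnd ℂ) (tauC q p ^ (w+1))).re| ≤ (q:ℝ)^(w+1)/2)
    (h4 : |(a * (starRingEnd ℂ) (tauC q p ^ (w+1))).re
          - (p:ℝ) * (a * (starRingEnd ℂ) (tauC q p ^ w)).re| ≤ (q:ℝ)^(w+1)/2) :
    IsNonzeroDigit q p w a := by
  set τ := tauC q p with hτ
  have hq1 : (1:ℝ) ≤ (q:ℝ) := by
    have : (2:ℝ) ≤ (q:ℝ) := by exact_mod_cast hq
    linarith
  have hqw1 : (1:ℝ) ≤ (q:ℝ)^w := one_le_pow₀ hq1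
  refine ⟨?_, ?_, ?_⟩
  · rw [ha]; exact mem_Ztau A B
  · rw [ha]; exact not_tau_dvd hq hp A B hA
  rintro y ⟨m, n, rfl⟩
  rw [Complex.norm_def, Complex.norm_def]
  apply Real.sqrt_le_sqrt
  rw [Complex.normSq_sub]
  set R0 := (a * (starRingEnd ℂ) (τ ^ w)).re with hR0
  set R1 := (a * (starRingEnd ℂ) (τ ^ (w+1))).re with hR1
  have hconj : (starRingEnd ℂ) (τ ^ w * ((m:ℂ) + (n:ℂ) * τ))
      = (starRingEnd ℂ) (τ^w) * ((m:ℂ) + (n:ℂ) * (starRingEnd ℂ) τ) := by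
    simp [map_mul, map_add]
  have hprod : a * (starRingEnd ℂ) (τ ^ w * ((m:ℂ) + (n:ℂ) * τ))
      = (m:ℂ) * (a * (starRingEnd ℂ) (τ^w)) + (n:ℂ) * (a * (starRingEnd ℂ) (τ^(w+1))) := by
    rw [hconj, map_pow, pow_succ, map_mul]
    rw [map_pow]
    ring
  have hmul_re : ∀ (k : ℤ) (z : ℂ), ((k:ℂ) * z).re = (k:ℝ) * z.re := by
    intro k z
    simp [Complex.mul_re]
  have hre : (a * (starRingEnd ℂ) (τ ^ w * ((m:ℂ) + (n:ℂ) * τ))).re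
      = (m:ℝ) * R0 + (n:ℝ) * R1 := by
    rw [hprod, Complex.add_re, hmul_re, hmul_re]
  have hNv : Complex.normSq (τ ^ w * ((m:ℂ) + (n:ℂ) * τ))
      = (q:ℝ)^w * ((m:ℝ)^2 + (p:ℝ)*(m:ℝ)*(n:ℝ) + (q:ℝ)*(n:ℝ)^2) := by
    rw [map_mul, map_pow, normSq_tau hq hp, normSq_coords hq hp]
  set N : ℝ := (m:ℝ)^2 + (p:ℝ)*(m:ℝ)*(n:ℝ) + (q:ℝ)*(n:ℝ)^2 with hNdef
  -- goal reduces to 2 * (m R0 + n R1) ≤ q^w * N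
  have key : 2 * ((m:ℝ) * R0 + (n:ℝ) * R1) ≤ (q:ℝ)^w * N := by
    rcases small_or_big hp hq m n with ⟨hm, hn'⟩|⟨hm, hn'⟩|⟨hm, hn'⟩|⟨hm, hn'⟩|⟨hm, hn'⟩|⟨hm, hn'⟩|⟨hm, hn'⟩|hbig
    · subst hm; subst hn'; norm_num [hNdef]
    · subst hm; subst hn'
      simp only [hNdef, Int.cast_one, Int.cast_zero]
      rw [abs_le] at h2
      nlinarith [h2.1, h2.2]
    · subst hm; subst hn'
      simp only [hNdef, Int.cast_neg, Int.cast_one, Int.cast_zero]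
      rw [abs_le] at h2
      nlinarith [h2.1, h2.2]
    · subst hm; subst hn'
      simp only [hNdef, Int.cast_one, Int.cast_zero]
      rw [abs_le] at h3
      rw [pow_succ] at h3
      nlinarith [h3.1, h3.2]
    · subst hm; subst hn'
      simp only [hNdef, Int.cast_neg, Int.cast_one, Int.cast_zero]
      rw [abs_le] at h3
      rw [pow_succ] at h3
      nlinarith [h3.1, h3.2]
    · subst hn'
      have hpp : (p:ℝ) * (p:ℝ) = 1 := hp2 hp
      rw [abs_le] at h4
      rw [pow_succ] at h4
      simp only [hNdef, hm, Int.cast_neg, Int.cast_one]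
      push_cast
      nlinarith [h4.1, h4.2]
    · subst hn'
      have hpp : (p:ℝ) * (p:ℝ) = 1 := hp2 hp
      rw [abs_le] at h4
      rw [pow_succ] at h4
      simp only [hNdef, hm, Int.cast_neg, Int.cast_one]
      push_cast
      nlinarith [h4.1, h4.2]
    · -- big case
      have hN4 : (4:ℝ) ≤ N := by
        have : ((4:ℤ):ℝ) ≤ ((m^2 + p*m*n + q*n^2 : ℤ):ℝ) := by exact_mod_cast hbig
        push_cast at this
        simpa [hNdef] using this
      set S : ℝ := (m:ℝ) * R0 + (n:ℝ) * R1 with hSdef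
      have hCS : S^2 ≤ (q:ℝ)^w * (q:ℝ)^w * N := by
        have h1 : S^2 ≤ Complex.normSq (a * (starRingEnd ℂ) (τ ^ w * ((m:ℂ) + (n:ℂ) * τ))) := by
          rw [← hre]; exact re_sq_le_normSq _
        rw [map_mul, Complex.normSq_conj, hNv] at h1
        calc S^2 ≤ Complex.normSq a * ((q:ℝ)^w * N) := h1
          _ ≤ (q:ℝ)^w * ((q:ℝ)^w * N) := by
              apply mul_le_mul_of_nonneg_right hn
              positivity
          _ = (q:ℝ)^w * (q:ℝ)^w * N := by ring
      have hNpos : (0:ℝ) ≤ N := by linarith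
      have t1 : (0:ℝ) ≤ ((q:ℝ)^w)^2*N*(N-4) :=
        mul_nonneg (mul_nonneg (sq_nonneg _) hNpos) (by linarith)
      have e1 : ((q:ℝ)^w*N)^2 - (2*S)^2 = ((q:ℝ)^w)^2*N*(N-4) + 4*(((q:ℝ)^w*(q:ℝ)^w*N) - S^2) := by
        ring
      have habs : (2*S)^2 ≤ ((q:ℝ)^w * N)^2 := by linarith [e1, t1, hCS]
      have h2S : 2*S ≤ (q:ℝ)^w * N := by
        have h1' : 2*S ≤ |2*S| := le_abs_self _
        have h2' : |2*S| = Real.sqrt ((2*S)^2) := (Real.sqrt_sq_eq_abs _).symm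
        have h3' : Real.sqrt ((2*S)^2) ≤ Real.sqrt (((q:ℝ)^w * N)^2) := Real.sqrt_le_sqrt habs
        have h4' : Real.sqrt (((q:ℝ)^w * N)^2) = (q:ℝ)^w * N := Real.sqrt_sq (by positivity)
        linarith
      linarith
  rw [hre, hNv]
  linarith [key]

lemma choose_A (hq : 2 ≤ q) (X : ℤ) : ∃ A : ℤ, ¬ q ∣ A ∧ |2*A + X| ≤ 2 := by
  set A0 : ℤ := -(X / 2) with hA0
  have hmod : 2*A0 + X = X % 2 := by omega
  have hr : X % 2 = 0 ∨ X % 2 = 1 := by omega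
  by_cases hdvd : q ∣ A0
  · rcases hr with h | h
    · refine ⟨A0 + 1, ?_, abs_le.mpr ⟨by omega, by omega⟩⟩
      intro hd
      have h1 : q ∣ 1 := by
        have := dvd_sub hd hdvd
        simpa using this
      have := Int.le_of_dvd one_pos h1
      omega
    · refine ⟨A0 - 1, ?_, abs_le.mpr ⟨by omega, by omega⟩⟩
      intro hd
      have h1 : q ∣ 1 := by
        have := dvd_sub hdvd hd
        simpa using this
      have := Int.le_of_dvd one_pos h1
      omega
  · exact ⟨A0, hdvd, abs_le.mpr ⟨by omega, by omega⟩⟩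

lemma abs_re_mul_conj_le (z u : ℂ) :
    |(z * (starRingEnd ℂ) u).re| ≤ Real.sqrt (Complex.normSq z * Complex.normSq u) := by
  apply Real.abs_le_sqrt
  have h := re_sq_le_normSq (z * (starRingEnd ℂ) u)
  rwa [map_mul, Complex.normSq_conj] at h

set_option maxHeartbeats 1000000 in
lemma exists_pair (hq : 2 ≤ q) (hp : p = -1 ∨ p = 1) (w : ℕ) (c : ℂ) (X Y : ℤ)
    (hc : c = (X:ℂ) + (Y:ℂ) * tauC q p) (hX : q ∣ X)
    (hcn : Complex.normSq c + (q:ℝ) + 6 ≤ 2 * (q:ℝ)^w)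
    (g2 : |(c * (starRingEnd ℂ) (tauC q p ^ w)).re|
          + Real.sqrt (((q:ℝ)+6) * (q:ℝ)^w) ≤ (q:ℝ)^w)
    (g3 : |(c * (starRingEnd ℂ) (tauC q p ^ (w+1))).re|
          + Real.sqrt (((q:ℝ)+6) * (q:ℝ)^(w+1)) ≤ (q:ℝ)^(w+1))
    (g4 : |(c * (starRingEnd ℂ) (tauC q p ^ (w+1))).re
            - (p:ℝ) * (c * (starRingEnd ℂ) (tauC q p ^ w)).re|
          + Real.sqrt (((q:ℝ)+6) * (q:ℝ)^(w+1)) ≤ (q:ℝ)^(w+1)) :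
    ∃ a : ℂ, IsNonzeroDigit q p w a ∧ IsNonzeroDigit q p w (a + c) := by
  obtain ⟨A, hA, hAabs⟩ := choose_A hq X
  set τ := tauC q p with hτ
  set B : ℤ := -(Y / 2) with hB
  have hBabs : |2*B + Y| ≤ 1 := abs_le.mpr ⟨by omega, by omega⟩
  set a : ℂ := (A:ℂ) + (B:ℂ) * τ with ha
  set e : ℂ := ((2*A + X : ℤ):ℂ) + ((2*B + Y : ℤ):ℂ) * τ with he
  have h2a : (2:ℂ) * a = e - c := by
    rw [ha, he, hc]; push_cast; ring
  have h2ac : (2:ℂ) * (a + c) = e + c := by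
    linear_combination h2a
  -- normSq of e
  have hNe : Complex.normSq e ≤ (q:ℝ) + 6 := by
    rw [he, normSq_coords hq hp]
    have hd1 : |((2*A + X : ℤ):ℝ)| ≤ 2 := by
      rw [← Int.cast_abs]; exact_mod_cast hAabs
    have hd2 : |((2*B + Y : ℤ):ℝ)| ≤ 1 := by
      rw [← Int.cast_abs]; exact_mod_cast hBabs
    have habs12 : |((2*A + X : ℤ):ℝ) * ((2*B + Y : ℤ):ℝ)| ≤ 2 := by
      rw [abs_mul]
      calc |((2*A + X : ℤ):ℝ)| * |((2*B + Y : ℤ):ℝ)| ≤ 2 * 1 :=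
            mul_le_mul hd1 hd2 (abs_nonneg _) (by norm_num)
        _ = 2 := by norm_num
    have habs12' := abs_le.mp habs12
    rw [abs_le] at hd1 hd2
    have hpd : (p:ℝ) * ((2*A + X : ℤ):ℝ) * ((2*B + Y : ℤ):ℝ) ≤ 2 := by
      rcases hp with h | h <;> subst h <;> push_cast <;> push_cast at habs12' <;>
        nlinarith [habs12'.1, habs12'.2]
    have hq0' : (0:ℝ) < (q:ℝ) := by
      have : (2:ℝ) ≤ (q:ℝ) := by exact_mod_cast hq
      linarith
    have h11 : ((2*A + X : ℤ):ℝ)^2 ≤ 4 := by nlinarith [hd1.1, hd1.2]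
    have h22 : ((2*B + Y : ℤ):ℝ)^2 ≤ 1 := by nlinarith [hd2.1, hd2.2]
    nlinarith [hpd, h11, h22, hq0']
  have hq0 : (0:ℝ) < (q:ℝ) := by
    have : (2:ℝ) ≤ (q:ℝ) := by exact_mod_cast hq
    linarith
  have hNτw : Complex.normSq (τ ^ w) = (q:ℝ)^w := by
    rw [map_pow, normSq_tau hq hp]
  have hNτw1 : Complex.normSq (τ ^ (w+1)) = (q:ℝ)^(w+1) := by
    rw [map_pow, normSq_tau hq hp]
  -- bounds on |(e * conj X).re|
  have heb : ∀ k : ℕ, |(e * (starRingEnd ℂ) (τ ^ k)).re|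
      ≤ Real.sqrt (((q:ℝ)+6) * (q:ℝ)^k) := by
    intro k
    refine le_trans (abs_re_mul_conj_le e (τ^k)) ?_
    apply Real.sqrt_le_sqrt
    rw [map_pow, normSq_tau hq hp]
    apply mul_le_mul_of_nonneg_right hNe (by positivity)
  -- τ^w * (τ - p) bound for e
  have hNτp : Complex.normSq (τ - (p:ℂ)) = (q:ℝ) := by
    have : τ - (p:ℂ) = ((-p : ℤ):ℂ) + ((1:ℤ):ℂ) * τ := by push_cast; ring
    rw [this, normSq_coords hq hp]
    have hpp := hp2 hp
    push_cast
    nlinarith [hpp]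
  have heb4 : |(e * (starRingEnd ℂ) (τ ^ (w+1))).re - (p:ℝ) * (e * (starRingEnd ℂ) (τ ^ w)).re|
      ≤ Real.sqrt (((q:ℝ)+6) * (q:ℝ)^(w+1)) := by
    have hkey : (e * (starRingEnd ℂ) (τ ^ (w+1))).re - (p:ℝ) * (e * (starRingEnd ℂ) (τ ^ w)).re
        = (e * (starRingEnd ℂ) (τ ^ w * (τ - (p:ℂ)))).re := by
      have hconj : (starRingEnd ℂ) (τ ^ w * (τ - (p:ℂ)))
          = (starRingEnd ℂ) (τ^w) * ((starRingEnd ℂ) τ - (p:ℂ)) := by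
        rw [map_mul, map_sub]
        congr 1
        simp
      have hexp : e * (starRingEnd ℂ) (τ ^ w * (τ - (p:ℂ)))
          = e * (starRingEnd ℂ) (τ^(w+1)) - (p:ℂ) * (e * (starRingEnd ℂ) (τ^w)) := by
        rw [hconj, pow_succ, map_mul]
        ring
      rw [hexp, Complex.sub_re]
      congr 1
      simp [Complex.mul_re]
    rw [hkey]
    refine le_trans (abs_re_mul_conj_le e _) ?_
    apply Real.sqrt_le_sqrt
    rw [map_mul, hNτw, hNτp, ← pow_succ]
    apply mul_le_mul_of_nonneg_right hNe (by positivity)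
  -- normSq bound for a and a+c
  have hre2 : ∀ z : ℂ, ((2:ℂ) * z).re = 2 * z.re := by intro z; simp
  have habs_sub : ∀ x y : ℝ, |x - y| ≤ |x| + |y| := by
    intro x y
    calc |x - y| = |x + (-y)| := by rw [sub_eq_add_neg]
      _ ≤ |x| + |-y| := abs_add_le _ _
      _ = |x| + |y| := by rw [abs_neg]
  have hN2 : Complex.normSq (2:ℂ) = 4 := by
    norm_num [Complex.normSq_apply]
  have hnorm : ∀ s : ℂ, ((2:ℂ) * s = e - c ∨ (2:ℂ) * s = e + c) →
      Complex.normSq s ≤ (q:ℝ)^w := by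
    intro s hs
    have h4s : Complex.normSq ((2:ℂ) * s) = 4 * Complex.normSq s := by
      rw [map_mul, hN2]
    have hcross : |(e * (starRingEnd ℂ) c).re| ≤ (Complex.normSq e + Complex.normSq c) / 2 := by
      refine le_trans (abs_re_mul_conj_le e c) ?_
      apply sqrt_le_of_sq
      · have := Complex.normSq_nonneg e
        have := Complex.normSq_nonneg c
        linarith
      · nlinarith [sq_nonneg (Complex.normSq e - Complex.normSq c)]
    have hcross' := abs_le.mp hcross
    have hNc0 := Complex.normSq_nonneg c
    rcases hs with h | h
    · have hh : Complex.normSq ((2:ℂ) * s)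
          = Complex.normSq e + Complex.normSq c - 2 * (e * (starRingEnd ℂ) c).re := by
        rw [h, Complex.normSq_sub]
      rw [h4s] at hh
      linarith [hcross'.1, hNe, hcn]
    · have hh : Complex.normSq ((2:ℂ) * s)
          = Complex.normSq e + Complex.normSq c + 2 * (e * (starRingEnd ℂ) c).re := by
        rw [h, Complex.normSq_add]
      rw [h4s] at hh
      linarith [hcross'.2, hNe, hcn]
  -- re bounds
  have hre_comb_sub : ∀ (s u : ℂ), (2:ℂ) * s = e - c →
      2 * (s * u).re = (e * u).re - (c * u).re := by
    intro s u h
    have hh : (2:ℂ) * (s * u) = e * u - c * u := by rw [← mul_assoc, h]; ring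
    have h2 := congrArg Complex.re hh
    rw [hre2] at h2
    rw [h2, Complex.sub_re]
  have hre_comb_add : ∀ (s u : ℂ), (2:ℂ) * s = e + c →
      2 * (s * u).re = (e * u).re + (c * u).re := by
    intro s u h
    have hh : (2:ℂ) * (s * u) = e * u + c * u := by rw [← mul_assoc, h]; ring
    have h2 := congrArg Complex.re hh
    rw [hre2] at h2
    rw [h2, Complex.add_re]
  have hre_bound : ∀ (s : ℂ) (k : ℕ), ((2:ℂ) * s = e - c ∨ (2:ℂ) * s = e + c) →
      (|(c * (starRingEnd ℂ) (τ ^ k)).re| + Real.sqrt (((q:ℝ)+6) * (q:ℝ)^k) ≤ (q:ℝ)^k) →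
      |(s * (starRingEnd ℂ) (τ ^ k)).re| ≤ (q:ℝ)^k / 2 := by
    intro s k hs hg
    have hek := heb k
    have h2abs : |2 * (s * (starRingEnd ℂ) (τ ^ k)).re| ≤ (q:ℝ)^k := by
      rcases hs with h | h
      · rw [hre_comb_sub s _ h]
        refine le_trans (habs_sub _ _) ?_
        linarith
      · rw [hre_comb_add s _ h]
        refine le_trans (abs_add_le _ _) ?_
        linarith
    rw [abs_mul, show |(2:ℝ)| = 2 by norm_num] at h2abs
    linarith
  have hre_bound4 : ∀ (s : ℂ), ((2:ℂ) * s = e - c ∨ (2:ℂ) * s = e + c) →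
      |(s * (starRingEnd ℂ) (τ ^ (w+1))).re - (p:ℝ) * (s * (starRingEnd ℂ) (τ ^ w)).re|
        ≤ (q:ℝ)^(w+1) / 2 := by
    intro s hs
    have hg4' := abs_le.mp (le_trans (le_add_of_nonneg_right (Real.sqrt_nonneg _)) g4)
    have hgc : |(c * (starRingEnd ℂ) (τ ^ (w+1))).re - (p:ℝ) * (c * (starRingEnd ℂ) (τ ^ w)).re|
        + Real.sqrt (((q:ℝ)+6) * (q:ℝ)^(w+1)) ≤ (q:ℝ)^(w+1) := g4
    have h2abs : |2 * ((s * (starRingEnd ℂ) (τ ^ (w+1))).re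
        - (p:ℝ) * (s * (starRingEnd ℂ) (τ ^ w)).re)| ≤ (q:ℝ)^(w+1) := by
      rcases hs with h | h
      · have e1 := hre_comb_sub s ((starRingEnd ℂ) (τ ^ (w+1))) h
        have e0 := hre_comb_sub s ((starRingEnd ℂ) (τ ^ w)) h
        have : 2 * ((s * (starRingEnd ℂ) (τ ^ (w+1))).re
            - (p:ℝ) * (s * (starRingEnd ℂ) (τ ^ w)).re)
            = ((e * (starRingEnd ℂ) (τ ^ (w+1))).re - (p:ℝ) * (e * (starRingEnd ℂ) (τ ^ w)).re)
            - ((c * (starRingEnd ℂ) (τ ^ (w+1))).re - (p:ℝ) * (c * (starRingEnd ℂ) (τ ^ w)).re) := by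
          linear_combination e1 - (p:ℝ) * e0
        rw [this]
        refine le_trans (habs_sub _ _) ?_
        linarith [heb4, hgc]
      · have e1 := hre_comb_add s ((starRingEnd ℂ) (τ ^ (w+1))) h
        have e0 := hre_comb_add s ((starRingEnd ℂ) (τ ^ w)) h
        have : 2 * ((s * (starRingEnd ℂ) (τ ^ (w+1))).re
            - (p:ℝ) * (s * (starRingEnd ℂ) (τ ^ w)).re)
            = ((e * (starRingEnd ℂ) (τ ^ (w+1))).re - (p:ℝ) * (e * (starRingEnd ℂ) (τ ^ w)).re)
            + ((c * (starRingEnd ℂ) (τ ^ (w+1))).re - (p:ℝ) * (c * (starRingEnd ℂ) (τ ^ w)).re) := by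
          linear_combination e1 - (p:ℝ) * e0
        rw [this]
        refine le_trans (abs_add_le _ _) ?_
        linarith [heb4, hgc]
    rw [abs_mul, show |(2:ℝ)| = 2 by norm_num] at h2abs
    linarith
  -- assemble
  refine ⟨a, ?_, ?_⟩
  · refine isDigit_of hq hp w A B hA a ha (hnorm a (Or.inl h2a))
      (hre_bound a w (Or.inl h2a) g2) (hre_bound a (w+1) (Or.inl h2a) g3)
      (hre_bound4 a (Or.inl h2a))
  · have hac : a + c = ((A + X : ℤ):ℂ) + ((B + Y : ℤ):ℂ) * τ := by
      rw [ha, hc]; push_cast; ring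
    have hAX : ¬ q ∣ (A + X) := by
      intro hd
      exact hA ((Int.dvd_add_right hX).mp (by rwa [add_comm] at hd))
    refine isDigit_of hq hp w (A+X) (B+Y) hAX (a+c) hac (hnorm (a+c) (Or.inr h2ac))
      (hre_bound (a+c) w (Or.inr h2ac) g2) (hre_bound (a+c) (w+1) (Or.inr h2ac) g3)
      (hre_bound4 (a+c) (Or.inr h2ac))

set_option maxHeartbeats 2000000 in
lemma arith1 (Q S : ℝ) (hQ : 2 ≤ Q) (hS : Q ≤ S) (hc : 5 ≤ Q ∨ Q^4 ≤ S) :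
    S + Q + 6 ≤ 2*(S*Q) ∧
    (Q+6)*(S*Q) ≤ (S*Q - S/2)^2 ∧
    (Q+6)*(S*Q^2) ≤ (S*Q^2 - S*(Q-1/2))^2 ∧
    (Q+6)*(S*Q^2) ≤ (S*Q^2 - S*Q)^2 := by
  have hS0 : (0:ℝ) ≤ S := by linarith
  have h2 : (4:ℝ) ≤ Q^2 := by nlinarith
  have h3 : (8:ℝ) ≤ Q^3 := by nlinarith [h2]
  have h4 : (16:ℝ) ≤ Q^4 := by nlinarith [h2]
  have key2 : (Q+6)*Q ≤ S*(Q-1/2)^2 := by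
    rcases hc with h | h
    · have hmono : Q*(Q-1/2)^2 ≤ S*(Q-1/2)^2 := mul_le_mul_of_nonneg_right hS (sq_nonneg _)
      nlinarith [hmono, sq_nonneg Q]
    · have hmono : Q^4*(Q-1/2)^2 ≤ S*(Q-1/2)^2 := mul_le_mul_of_nonneg_right h (sq_nonneg _)
      nlinarith [hmono, h2, h3, h4, sq_nonneg (Q - 1/2)]
  have key3 : (Q+6)*Q^2 ≤ S*(Q^2-Q+1/2)^2 := by
    rcases hc with h | h
    · have h25 : (25:ℝ) ≤ Q^2 := by nlinarith
      have h5 : (0:ℝ) ≤ Q^3 - 2*Q^2 - 6 := by nlinarith [h25]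
      have hx : (0:ℝ) ≤ Q^2 - Q := by nlinarith
      have hmono1 : Q*(Q^2-Q)^2 ≤ Q*(Q^2-Q+1/2)^2 := by
        nlinarith [mul_nonneg (by linarith : (0:ℝ) ≤ Q) hx]
      have hkey : (Q+6)*Q^2 ≤ Q*(Q^2-Q+1/2)^2 := by
        nlinarith [mul_nonneg (sq_nonneg Q) h5, hmono1]
      have hmono : Q*(Q^2-Q+1/2)^2 ≤ S*(Q^2-Q+1/2)^2 := mul_le_mul_of_nonneg_right hS (sq_nonneg _)
      linarith
    · have hkey : (Q+6)*Q^2 ≤ Q^4*(Q^2-Q+1/2)^2 := by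
        nlinarith [h2, h3, h4, sq_nonneg (Q^2 - Q)]
      have hmono : Q^4*(Q^2-Q+1/2)^2 ≤ S*(Q^2-Q+1/2)^2 := mul_le_mul_of_nonneg_right h (sq_nonneg _)
      linarith
  have key4 : (Q+6)*Q^2 ≤ S*(Q^2-Q)^2 := by
    rcases hc with h | h
    · have h25 : (25:ℝ) ≤ Q^2 := by nlinarith
      have h5 : (0:ℝ) ≤ Q^3 - 2*Q^2 - 6 := by nlinarith [h25]
      have hkey : (Q+6)*Q^2 ≤ Q*(Q^2-Q)^2 := by
        nlinarith [mul_nonneg (sq_nonneg Q) h5]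
      have hmono : Q*(Q^2-Q)^2 ≤ S*(Q^2-Q)^2 := mul_le_mul_of_nonneg_right hS (sq_nonneg _)
      linarith
    · have hone : (1:ℝ) ≤ (Q-1)^2 := by nlinarith
      have h8Q : 8*Q ≤ Q^4 := by nlinarith [h3]
      have hin : Q + 6 ≤ Q^4 * (Q-1)^2 := by
        nlinarith [h8Q, mul_nonneg (by positivity : (0:ℝ) ≤ Q^4) (by linarith : (0:ℝ) ≤ (Q-1)^2 - 1)]
      have hkey : (Q+6)*Q^2 ≤ Q^4*(Q^2-Q)^2 := by
        nlinarith [mul_nonneg (sq_nonneg Q) (by linarith : (0:ℝ) ≤ Q^4*(Q-1)^2 - Q - 6)]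
      have hmono : Q^4*(Q^2-Q)^2 ≤ S*(Q^2-Q)^2 := mul_le_mul_of_nonneg_right h (sq_nonneg _)
      linarith
  refine ⟨?_, ?_, ?_, ?_⟩
  · rcases hc with h | h
    · nlinarith
    · nlinarith [h4, h2]
  · nlinarith [mul_le_mul_of_nonneg_left key2 hS0]
  · nlinarith [mul_le_mul_of_nonneg_left key3 hS0]
  · nlinarith [mul_le_mul_of_nonneg_left key4 hS0]

set_option maxHeartbeats 2000000 in
lemma arith2 (Q T : ℝ) (hQ : 2 ≤ Q) (hT1 : 1 ≤ T) (hc : (11 ≤ Q ∧ Q^2 ≤ T) ∨ Q^6 ≤ T) :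
    Q^2*T + Q + 6 ≤ 2*(Q^2*T) ∧
    (Q+6)*(Q^2*T) ≤ (Q^2*T - Q*T*(Q-1/2))^2 ∧
    (Q+6)*(Q^3*T) ≤ (Q^3*T - Q*T*(3*Q-1)/2)^2 ∧
    (Q+6)*(Q^3*T) ≤ (Q^3*T - Q^2*T/2)^2 := by
  have hT0 : (0:ℝ) ≤ T := by linarith
  have h2 : (4:ℝ) ≤ Q^2 := by nlinarith
  have h3 : (8:ℝ) ≤ Q^3 := by nlinarith [h2]
  have h4 : (16:ℝ) ≤ Q^4 := by nlinarith [h2]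
  have h6 : (64:ℝ) ≤ Q^6 := by nlinarith [h2, h4]
  have key2 : 4*(Q+6) ≤ T := by
    rcases hc with ⟨h11, hT⟩ | hT
    · nlinarith [hT]
    · nlinarith [hT, h2, h4]
  have key1 : Q + 6 ≤ Q^2*T := by
    nlinarith [key2, h2]
  have key3 : 4*(Q+6)*Q ≤ T*(2*Q^2-3*Q+1)^2 := by
    have hfac : (1:ℝ) ≤ (2*Q^2-3*Q+1)^2 := by nlinarith [h2]
    have hmono : T*1 ≤ T*(2*Q^2-3*Q+1)^2 := mul_le_mul_of_nonneg_left hfac hT0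
    rcases hc with ⟨h11, hT⟩ | hT
    · nlinarith [hT, hmono, mul_le_mul_of_nonneg_right hT (by positivity : (0:ℝ) ≤ (2*Q^2-3*Q+1)^2), h2]
    · nlinarith [hT, hmono, mul_le_mul_of_nonneg_right hT (by positivity : (0:ℝ) ≤ (2*Q^2-3*Q+1)^2), h2, h4, h6]
  have key4 : Q + 6 ≤ T*Q*(Q-1/2)^2 := by
    have hfac : (1:ℝ) ≤ Q*(Q-1/2)^2 := by nlinarith
    have := mul_le_mul key2 hfac (by norm_num) hT0
    nlinarith [this]
  refine ⟨?_, ?_, ?_, ?_⟩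
  · linarith [key1]
  · nlinarith [mul_le_mul_of_nonneg_left key2 (by positivity : (0:ℝ) ≤ Q^2*T), hT0, h2]
  · nlinarith [mul_le_mul_of_nonneg_left key3 (by positivity : (0:ℝ) ≤ Q*T), hT0, h2]
  · nlinarith [mul_le_mul_of_nonneg_left key4 (by positivity : (0:ℝ) ≤ Q^2*T), hT0, h2]

lemma re_ofReal_mul (r : ℝ) (z : ℂ) : ((r:ℂ) * z).re = r * z.re := by simp

lemma pow_mul_conj (hq : 2 ≤ q) (hp : p = -1 ∨ p = 1) (k : ℕ) :
    tauC q p ^ k * (starRingEnd ℂ) (tauC q p ^ k) = (((q:ℝ)^k : ℝ):ℂ) := by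
  rw [Complex.mul_conj, map_pow, normSq_tau hq hp]

lemma habsp (hp : p = -1 ∨ p = 1) : |(p:ℝ)| = 1 := by
  rcases hp with h | h <;> subst h <;> norm_num

lemma tau_sq_re (hq : 2 ≤ q) (hp : p = -1 ∨ p = 1) :
    ((tauC q p)^2).re = 1/2 - (q:ℝ) := by
  rw [tau_sq hq hp]
  have hpp := hp2 hp
  simp [Complex.sub_re, Complex.mul_re, tau_re, tau_im]
  linear_combination hpp/2

lemma tau_cube_re (hq : 2 ≤ q) (hp : p = -1 ∨ p = 1) :
    ((tauC q p)^3).re = (p:ℝ) * (1 - 3*(q:ℝ))/2 := by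
  have hpp := hp2 hp
  have hexp2 : (tauC q p)^3
      = ((p:ℂ)*(p:ℂ) - (q:ℂ)) * tauC q p - (p:ℂ)*(q:ℂ) := by
    have h3 : (tauC q p)^3 = (tauC q p)^2 * tauC q p := by ring
    rw [h3, tau_sq hq hp]
    have hexp : ((p:ℂ) * tauC q p - (q:ℂ)) * tauC q p
        = (p:ℂ) * ((tauC q p)^2) - (q:ℂ) * tauC q p := by ring
    rw [hexp, tau_sq hq hp]
    ring
  rw [hexp2]
  simp [Complex.sub_re, Complex.mul_re, Complex.mul_im, tau_re, tau_im]
  linear_combination ((p:ℝ)/2) * hpp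

set_option maxHeartbeats 1000000 in
lemma part1 (hq : 2 ≤ q) (hp : p = -1 ∨ p = 1) (v : ℕ) (hc : 5 ≤ v + 2 ∨ 5 ≤ q) :
    ∃ a : ℂ, IsNonzeroDigit q p (v+2) a ∧
      IsNonzeroDigit q p (v+2) (a + tauC q p ^ (v+1)) := by
  set τ := tauC q p with hτ
  have hQ2 : (2:ℝ) ≤ (q:ℝ) := by exact_mod_cast hq
  have hQ0 : (0:ℝ) < (q:ℝ) := by linarith
  set Q : ℝ := (q:ℝ) with hQ
  set S : ℝ := Q^(v+1) with hSd
  have hS0 : (0:ℝ) ≤ S := by positivity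
  have hS : Q ≤ S := by
    calc Q = Q^1 := (pow_one Q).symm
      _ ≤ Q^(v+1) := pow_le_pow_right₀ (by linarith) (by omega)
  have hcS : 5 ≤ Q ∨ Q^4 ≤ S := by
    rcases hc with h | h
    · right; exact pow_le_pow_right₀ (by linarith) (by omega)
    · left; rw [hQ]; exact_mod_cast h
  obtain ⟨h1, h2, h3, h4⟩ := arith1 Q S hQ2 hS hcS
  have hqw : Q^(v+2) = S*Q := by rw [hSd, ← pow_succ]
  have hqw1 : Q^(v+3) = S*Q^2 := by rw [hSd, ← pow_add]
  set c : ℂ := τ^(v+1) with hcd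
  have hmc : τ^(v+1) * (starRingEnd ℂ) (τ^(v+1)) = ((S:ℝ):ℂ) := by
    rw [hτ, hSd, hQ]; exact pow_mul_conj hq hp (k := v+1)
  have hre0 : (c * (starRingEnd ℂ) (τ^(v+2))).re = S * ((p:ℝ)/2) := by
    have hh : c * (starRingEnd ℂ) (τ^(v+2)) = ((S:ℝ):ℂ) * (starRingEnd ℂ) τ := by
      have hpow : (τ:ℂ)^(v+2) = τ^(v+1) * τ := by ring
      rw [hcd, hpow, map_mul, ← mul_assoc, hmc]
    rw [hh, re_ofReal_mul, Complex.conj_re, tau_re]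
  have hre1 : (c * (starRingEnd ℂ) (τ^(v+3))).re = S * (1/2 - Q) := by
    have hh : c * (starRingEnd ℂ) (τ^(v+3)) = ((S:ℝ):ℂ) * (starRingEnd ℂ) (τ^2) := by
      have hpow : (τ:ℂ)^(v+3) = τ^(v+1) * τ^2 := by ring
      rw [hcd, hpow, map_mul, ← mul_assoc, hmc]
    rw [hh, re_ofReal_mul, Complex.conj_re]
    rw [hτ, tau_sq_re hq hp, hQ]
  have hpp := hp2 hp
  have habs0 : |(c * (starRingEnd ℂ) (τ^(v+2))).re| = S/2 := by
    rw [hre0, abs_mul, _root_.abs_of_nonneg hS0, abs_div, habsp hp]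
    norm_num
    ring
  have habs1 : |(c * (starRingEnd ℂ) (τ^(v+3))).re| = S*(Q-1/2) := by
    rw [hre1, abs_mul, _root_.abs_of_nonneg hS0, abs_of_nonpos (by linarith : 1/2 - Q ≤ 0)]
    ring
  have habs4 : |(c * (starRingEnd ℂ) (τ^(v+3))).re
      - (p:ℝ) * (c * (starRingEnd ℂ) (τ^(v+2))).re| = S*Q := by
    rw [hre1, hre0]
    have hh : S * (1/2 - Q) - (p:ℝ) * (S * ((p:ℝ)/2)) = -(S*Q) := by
      linear_combination (-(S:ℝ)/2) * hpp
    rw [hh, abs_neg, _root_.abs_of_nonneg (by positivity : (0:ℝ) ≤ S*Q)]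
  -- sqrt bounds
  have hsq2 : Real.sqrt ((Q+6)*Q^(v+2)) ≤ S*Q - S/2 := by
    apply sqrt_le_of_sq _ _ (by nlinarith) (by rw [hqw]; nlinarith [h2])
  have hsq3 : Real.sqrt ((Q+6)*Q^(v+3)) ≤ S*Q^2 - S*(Q-1/2) := by
    apply sqrt_le_of_sq _ _ (by nlinarith) (by rw [hqw1]; nlinarith [h3])
  have hsq4 : Real.sqrt ((Q+6)*Q^(v+3)) ≤ S*Q^2 - S*Q := by
    apply sqrt_le_of_sq _ _ (by nlinarith) (by rw [hqw1]; nlinarith [h4])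
  have hXd : q ∣ (tXY q p (v+1)).1 := by
    refine ⟨-(tXY q p v).2, ?_⟩
    show (tXY q p (v+1)).1 = q * -(tXY q p v).2
    simp [tXY]
  refine exists_pair hq hp (v+2) c (tXY q p (v+1)).1 (tXY q p (v+1)).2
    ?_ hXd ?_ ?_ ?_ ?_
  · rw [hcd]; exact tau_pow hq hp (v+1)
  · rw [hcd, map_pow, normSq_tau hq hp, hqw]
    rw [← hSd]
    linarith [h1]
  · rw [← hQ, habs0]
    linarith [hsq2, hqw.le, hqw.ge]
  · rw [show v+2+1 = v+3 from rfl, ← hQ, habs1]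
    linarith [hsq3, hqw1.le, hqw1.ge]
  · rw [show v+2+1 = v+3 from rfl, ← hQ, habs4]
    linarith [hsq4, hqw1.le, hqw1.ge]

set_option maxHeartbeats 1000000 in
lemma part2 (hq : 2 ≤ q) (hp : p = -1 ∨ p = 1) (v : ℕ)
    (hc : (4 ≤ v + 2 ∧ 11 ≤ q) ∨ 8 ≤ v + 2) :
    ∃ b : ℂ, IsNonzeroDigit q p (v+2) b ∧
      IsNonzeroDigit q p (v+2) (b + (q:ℂ) * tauC q p ^ v) := by
  set τ := tauC q p with hτ
  have hQ2 : (2:ℝ) ≤ (q:ℝ) := by exact_mod_cast hq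
  have hQ0 : (0:ℝ) < (q:ℝ) := by linarith
  set Q : ℝ := (q:ℝ) with hQ
  set T : ℝ := Q^v with hTd
  have hT0 : (0:ℝ) ≤ T := by positivity
  have hT1 : (1:ℝ) ≤ T := one_le_pow₀ (by linarith)
  have hcT : (11 ≤ Q ∧ Q^2 ≤ T) ∨ Q^6 ≤ T := by
    rcases hc with ⟨hv, h11⟩ | h8
    · left
      refine ⟨by rw [hQ]; exact_mod_cast h11, ?_⟩
      exact pow_le_pow_right₀ (by linarith) (by omega)
    · right; exact pow_le_pow_right₀ (by linarith) (by omega)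
  obtain ⟨h1, h2, h3, h4⟩ := arith2 Q T hQ2 hT1 hcT
  have hqw : Q^(v+2) = Q^2*T := by rw [hTd, show v+2 = 2+v by omega, pow_add]
  have hqw1 : Q^(v+3) = Q^3*T := by rw [hTd, show v+3 = 3+v by omega, pow_add]
  set c : ℂ := (q:ℂ) * τ^v with hcd
  have hmc : τ^v * (starRingEnd ℂ) (τ^v) = ((T:ℝ):ℂ) := by
    rw [hτ, hTd, hQ]; exact pow_mul_conj hq hp (k := v)
  have hqcast : (q:ℂ) = ((Q:ℝ):ℂ) := by rw [hQ]; push_cast; rfl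
  have hre0 : (c * (starRingEnd ℂ) (τ^(v+2))).re = Q*T*(1/2 - Q) := by
    have hh : c * (starRingEnd ℂ) (τ^(v+2)) = (((Q*T):ℝ):ℂ) * (starRingEnd ℂ) (τ^2) := by
      have hpow : (τ:ℂ)^(v+2) = τ^v * τ^2 := by ring
      rw [hcd, hpow, map_mul, hqcast]
      push_cast
      rw [show ((Q:ℝ):ℂ) * τ^v * ((starRingEnd ℂ) (τ^v) * (starRingEnd ℂ) (τ^2))
          = ((Q:ℝ):ℂ) * (τ^v * (starRingEnd ℂ) (τ^v)) * (starRingEnd ℂ) (τ^2) by ring, hmc]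
    rw [hh, re_ofReal_mul, Complex.conj_re]
    rw [hτ, tau_sq_re hq hp, hQ]
  have hre1 : (c * (starRingEnd ℂ) (τ^(v+3))).re = Q*T*((p:ℝ)*(1-3*Q)/2) := by
    have hh : c * (starRingEnd ℂ) (τ^(v+3)) = (((Q*T):ℝ):ℂ) * (starRingEnd ℂ) (τ^3) := by
      have hpow : (τ:ℂ)^(v+3) = τ^v * τ^3 := by ring
      rw [hcd, hpow, map_mul, hqcast]
      push_cast
      rw [show ((Q:ℝ):ℂ) * τ^v * ((starRingEnd ℂ) (τ^v) * (starRingEnd ℂ) (τ^3))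
          = ((Q:ℝ):ℂ) * (τ^v * (starRingEnd ℂ) (τ^v)) * (starRingEnd ℂ) (τ^3) by ring, hmc]
    rw [hh, re_ofReal_mul, Complex.conj_re]
    rw [hτ, tau_cube_re hq hp, hQ]
  have hpp := hp2 hp
  have hQT0 : (0:ℝ) ≤ Q*T := by positivity
  have habs0 : |(c * (starRingEnd ℂ) (τ^(v+2))).re| = Q*T*(Q-1/2) := by
    rw [hre0, abs_mul, _root_.abs_of_nonneg hQT0,
      abs_of_nonpos (by linarith : 1/2 - Q ≤ 0)]
    ring
  have habs1 : |(c * (starRingEnd ℂ) (τ^(v+3))).re| = Q*T*(3*Q-1)/2 := by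
    rw [hre1, abs_mul, _root_.abs_of_nonneg hQT0, abs_div, abs_mul, habsp hp,
      abs_of_nonpos (by linarith : 1 - 3*Q ≤ 0)]
    norm_num
    ring
  have habs4 : |(c * (starRingEnd ℂ) (τ^(v+3))).re
      - (p:ℝ) * (c * (starRingEnd ℂ) (τ^(v+2))).re| = Q^2*T/2 := by
    rw [hre1, hre0]
    have hh : Q*T*((p:ℝ)*(1-3*Q)/2) - (p:ℝ) * (Q*T*(1/2 - Q)) = -((p:ℝ)*(Q^2*T/2)) := by
      ring
    rw [hh, abs_neg, abs_mul, habsp hp, one_mul,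
      _root_.abs_of_nonneg (by positivity : (0:ℝ) ≤ Q^2*T/2)]
  have hsq2 : Real.sqrt ((Q+6)*Q^(v+2)) ≤ Q^2*T - Q*T*(Q-1/2) := by
    apply sqrt_le_of_sq _ _ (by nlinarith) (by rw [hqw]; nlinarith [h2])
  have hsq3 : Real.sqrt ((Q+6)*Q^(v+3)) ≤ Q^3*T - Q*T*(3*Q-1)/2 := by
    apply sqrt_le_of_sq _ _ (by nlinarith [hT1]) (by rw [hqw1]; nlinarith [h3])
  have hsq4 : Real.sqrt ((Q+6)*Q^(v+3)) ≤ Q^3*T - Q^2*T/2 := by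
    apply sqrt_le_of_sq _ _ (by nlinarith [hT1]) (by rw [hqw1]; nlinarith [h4])
  have hXd : q ∣ q * (tXY q p v).1 := Dvd.intro _ rfl
  refine exists_pair hq hp (v+2) c (q * (tXY q p v).1) (q * (tXY q p v).2)
    ?_ hXd ?_ ?_ ?_ ?_
  · rw [hcd, hτ]
    rw [tau_pow hq hp v]
    push_cast
    ring
  · rw [hcd, map_mul, map_pow, normSq_tau hq hp]
    have hnq : Complex.normSq ((q:ℂ)) = Q^2 := by
      rw [hqcast, Complex.normSq_ofReal]; ring
    rw [hnq, ← hQ, ← hTd]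
    linarith [h1, hqw.le, hqw.ge]
  · rw [← hQ, habs0]
    linarith [hsq2, hqw.le, hqw.ge]
  · rw [show v+2+1 = v+3 from rfl, ← hQ, habs1]
    linarith [hsq3, hqw1.le, hqw1.ge]
  · rw [show v+2+1 = v+3 from rfl, ← hQ, habs4]
    linarith [hsq4, hqw1.le, hqw1.ge]

end S18

/-- existence of compensating changes in the least significant
digit. -/
theorem stmt18 (q p : ℤ) (hq : 2 ≤ q) (hp : p = -1 ∨ p = 1) (w : ℕ) (hw : 2 ≤ w) :
    ((5 ≤ w ∨ 5 ≤ q) →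
      ∃ a : ℂ, IsNonzeroDigit q p w a ∧
        IsNonzeroDigit q p w (a + (tauC q p) ^ (w - 1))) ∧
    (((4 ≤ w ∧ 11 ≤ q) ∨ 8 ≤ w) →
      ∃ b : ℂ, IsNonzeroDigit q p w b ∧
        IsNonzeroDigit q p w (b + (starRingEnd ℂ) (tauC q p) * (tauC q p) ^ (w - 1))) := by
  obtain ⟨v, rfl⟩ : ∃ v, w = v + 2 := ⟨w - 2, by omega⟩
  constructor
  · intro h5
    obtain ⟨a, ha1, ha2⟩ := S18.part1 hq hp v h5
    refine ⟨a, ha1, ?_⟩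
    rw [show v + 2 - 1 = v + 1 by omega]
    exact ha2
  · intro h8
    obtain ⟨b, hb1, hb2⟩ := S18.part2 hq hp v h8
    refine ⟨b, hb1, ?_⟩
    have hconv : (starRingEnd ℂ) (tauC q p) * tauC q p ^ (v + 2 - 1)
        = (q:ℂ) * tauC q p ^ v := by
      rw [show v + 2 - 1 = v + 1 by omega]
      rw [show tauC q p ^ (v+1) = tauC q p * tauC q p ^ v by ring, ← mul_assoc]
      rw [show (starRingEnd ℂ) (tauC q p) * tauC q p
          = tauC q p * (starRingEnd ℂ) (tauC q p) from mul_comm _ _]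
      rw [S18.mul_conj_tau hq hp]
    rw [hconv]
    exact hb2
end
end
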